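/- arXiv:2405.03508 — 2 statements merged into one kernel-verified Lean document; each statement's English description precedes it below -/
import Mathlib

section
/- Let α be a 0-chain of the orbit. The following are equivalent: (1) α cancels decoupled fractions; (2) ε^x(α) = 0 and ε^y(α) = 0, i.e. the sum of the coefficients of α over every x-clique is zero and over every y-clique is zero; (3) there exists a 1-cycle c of the orbit graph with α = ∂^x(c); (3') there exists a 1-cycle c of the orbit graph with α = ∂^y(c). -/
open IntermediateField
open scoped BigOperators Classical

set_option synthInstance.maxHeartbeats 1000000
set_option maxHeartbeats 1600000

noncomputable section

namespace QuadrantWalk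

variable {K : Type} [Field K] [Algebra ℂ K]

/-- Evaluation of the step (Laurent) polynomial `S(X,Y) = ∑ w_{i,j} X^i Y^j`
    at a pair of elements of a field. -/
def stepEval (St : Finset (ℤ × ℤ)) (w : ℤ × ℤ → ℂ) (u v : K) : K :=
  ∑ p ∈ St, algebraMap ℂ K (w p) * u ^ p.1 * v ^ p.2

/-- The step polynomial involves both `X` and `Y`. -/
def NotUnivariate (St : Finset (ℤ × ℤ)) : Prop :=
  (∃ p ∈ St, ∃ q ∈ St, p.1 ≠ q.1) ∧ ∃ p ∈ St, ∃ q ∈ St, p.2 ≠ q.2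

/-- The kernel polynomial `K̃(X,Y,t) = X^mx * Y^my * (1 - t·S(X,Y))` as an element of
`ℂ[X,Y,t]`, with variables `0 ↦ X`, `1 ↦ Y`, `2 ↦ t`. -/
def kernelPoly (St : Finset (ℤ × ℤ)) (w : ℤ × ℤ → ℂ) (mx my : ℕ) :
    MvPolynomial (Fin 3) ℂ :=
  MvPolynomial.X 0 ^ mx * MvPolynomial.X 1 ^ my -
    MvPolynomial.X 2 *
      ∑ p ∈ St, MvPolynomial.C (w p) *
        MvPolynomial.X 0 ^ (p.1 + (mx : ℤ)).toNat *
        MvPolynomial.X 1 ^ (p.2 + (my : ℤ)).toNat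

/-- `-mx` (resp. `-my`) is the smallest `X`-exponent (resp. `Y`-exponent) of the model. -/
structure ExponentBounds (St : Finset (ℤ × ℤ)) (mx my : ℕ) : Prop where
  lowerX : ∀ p ∈ St, -(mx : ℤ) ≤ p.1
  lowerY : ∀ p ∈ St, -(my : ℤ) ≤ p.2
  attainX : ∃ p ∈ St, p.1 = -(mx : ℤ)
  attainY : ∃ p ∈ St, p.2 = -(my : ℤ)

/-- `x`-adjacency : equal first coordinates and equal values of `S`. -/
def XAdj (St : Finset (ℤ × ℤ)) (w : ℤ × ℤ → ℂ) (a b : K × K) : Prop :=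
  a.1 = b.1 ∧ stepEval St w a.1 a.2 = stepEval St w b.1 b.2

/-- `y`-adjacency : equal second coordinates and equal values of `S`. -/
def YAdj (St : Finset (ℤ × ℤ)) (w : ℤ × ℤ → ℂ) (a b : K × K) : Prop :=
  a.2 = b.2 ∧ stepEval St w a.1 a.2 = stepEval St w b.1 b.2

/-- Adjacency. -/
def Adj (St : Finset (ℤ × ℤ)) (w : ℤ × ℤ → ℂ) (a b : K × K) : Prop :=
  XAdj St w a b ∨ YAdj St w a b

/-- The orbit of the walk: the equivalence class of `(x,y)` under the
reflexive-transitive closure of adjacency. -/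
def orbit (St : Finset (ℤ × ℤ)) (w : ℤ × ℤ → ℂ) (x y : K) : Set (K × K) :=
  {a | Relation.ReflTransGen (Adj St w) (x, y) a}

/-- `k = ℂ(S(x,y))`. -/
def kF (St : Finset (ℤ × ℤ)) (w : ℤ × ℤ → ℂ) (x y : K) : IntermediateField ℂ K :=
  adjoin ℂ {stepEval St w x y}

/-- `k(x) = ℂ(x, S(x,y))`. -/
def kxF (St : Finset (ℤ × ℤ)) (w : ℤ × ℤ → ℂ) (x y : K) : IntermediateField ℂ K :=
  adjoin ℂ {x, stepEval St w x y}

/-- `k(y) = ℂ(y, S(x,y))`. -/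
def kyF (St : Finset (ℤ × ℤ)) (w : ℤ × ℤ → ℂ) (x y : K) : IntermediateField ℂ K :=
  adjoin ℂ {y, stepEval St w x y}

/-- `k(x,y) = ℂ(x,y)`. -/
def kxyF (x y : K) : IntermediateField ℂ K := adjoin ℂ {x, y}

/-- `k(𝒪)`: the subfield generated over `k` by all coordinates of the orbit. -/
def orbitF (St : Finset (ℤ × ℤ)) (w : ℤ × ℤ → ℂ) (x y : K) : IntermediateField ℂ K :=
  adjoin ℂ ({stepEval St w x y} ∪ {z | ∃ a ∈ orbit St w x y, z = a.1 ∨ z = a.2})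

/-- The standing hypotheses: nonzero weights, a non-univariate step polynomial,
`x, y` algebraically independent over `ℂ`, and `𝕂` an algebraic closure of `ℂ(x,y)`. -/
structure Setting (St : Finset (ℤ × ℤ)) (w : ℤ × ℤ → ℂ) (x y : K) : Prop where
  weight_ne : ∀ p ∈ St, w p ≠ 0
  notUniv : NotUnivariate St
  indep : AlgebraicIndependent ℂ ![x, y]
  algClosed : IsAlgClosed K
  algebraic : Algebra.IsAlgebraic (kxyF x y) K

lemma self_mem_orbit (St : Finset (ℤ × ℤ)) (w : ℤ × ℤ → ℂ) (x y : K) :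
    (x, y) ∈ orbit St w x y := Relation.ReflTransGen.refl

lemma x_mem_orbitF (St : Finset (ℤ × ℤ)) (w : ℤ × ℤ → ℂ) (x y : K) :
    x ∈ orbitF St w x y := by
  apply subset_adjoin
  exact Set.mem_union_right _ ⟨(x, y), self_mem_orbit St w x y, Or.inl rfl⟩

lemma y_mem_orbitF (St : Finset (ℤ × ℤ)) (w : ℤ × ℤ → ℂ) (x y : K) :
    y ∈ orbitF St w x y := by
  apply subset_adjoin
  exact Set.mem_union_right _ ⟨(x, y), self_mem_orbit St w x y, Or.inr rfl⟩

lemma S_mem_orbitF (St : Finset (ℤ × ℤ)) (w : ℤ × ℤ → ℂ) (x y : K) :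
    stepEval St w x y ∈ orbitF St w x y := by
  apply subset_adjoin
  exact Set.mem_union_left _ rfl

lemma x_mem_kxF (St : Finset (ℤ × ℤ)) (w : ℤ × ℤ → ℂ) (x y : K) :
    x ∈ kxF St w x y :=
  subset_adjoin ℂ _ (Set.mem_insert _ _)

lemma S_mem_kxF (St : Finset (ℤ × ℤ)) (w : ℤ × ℤ → ℂ) (x y : K) :
    stepEval St w x y ∈ kxF St w x y :=
  subset_adjoin ℂ _ (Set.mem_insert_of_mem _ rfl)

lemma y_mem_kyF (St : Finset (ℤ × ℤ)) (w : ℤ × ℤ → ℂ) (x y : K) :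
    y ∈ kyF St w x y :=
  subset_adjoin ℂ _ (Set.mem_insert _ _)

lemma S_mem_kyF (St : Finset (ℤ × ℤ)) (w : ℤ × ℤ → ℂ) (x y : K) :
    stepEval St w x y ∈ kyF St w x y :=
  subset_adjoin ℂ _ (Set.mem_insert_of_mem _ rfl)

/-- The subgroup of `ℂ`-automorphisms of `M` fixing the subfield `E` pointwise. -/
def fixingAuts (E M : IntermediateField ℂ K) : Subgroup (↥M ≃ₐ[ℂ] ↥M) where
  carrier := {σ | ∀ (z : K) (_ : z ∈ E) (hzM : z ∈ M), σ ⟨z, hzM⟩ = ⟨z, hzM⟩}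
  one_mem' := fun _ _ _ => rfl
  mul_mem' := by
    intro σ τ hσ hτ z hzE hzM
    show σ (τ ⟨z, hzM⟩) = ⟨z, hzM⟩
    rw [hτ z hzE hzM, hσ z hzE hzM]
  inv_mem' := by
    intro σ hσ z hzE hzM
    show σ.symm ⟨z, hzM⟩ = ⟨z, hzM⟩
    conv_lhs => rw [← hσ z hzE hzM]
    exact σ.symm_apply_apply _

/-- The Galois group `G_x = Gal(k(𝒪)|k(x))`. -/
def Gx (St : Finset (ℤ × ℤ)) (w : ℤ × ℤ → ℂ) (x y : K) :
    Subgroup (↥(orbitF St w x y) ≃ₐ[ℂ] ↥(orbitF St w x y)) :=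
  fixingAuts (kxF St w x y) (orbitF St w x y)

/-- The Galois group `G_y = Gal(k(𝒪)|k(y))`. -/
def Gy (St : Finset (ℤ × ℤ)) (w : ℤ × ℤ → ℂ) (x y : K) :
    Subgroup (↥(orbitF St w x y) ≃ₐ[ℂ] ↥(orbitF St w x y)) :=
  fixingAuts (kyF St w x y) (orbitF St w x y)

/-- The Galois group `G_{xy} = Gal(k(𝒪)|k(x,y))`. -/
def Gxy (St : Finset (ℤ × ℤ)) (w : ℤ × ℤ → ℂ) (x y : K) :
    Subgroup (↥(orbitF St w x y) ≃ₐ[ℂ] ↥(orbitF St w x y)) :=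
  fixingAuts (kxyF x y) (orbitF St w x y)

/-- Extend an automorphism of an intermediate field to a map on all of `K`
(by the identity outside). -/
def extendAut {M : IntermediateField ℂ K} (σ : ↥M ≃ₐ[ℂ] ↥M) (z : K) : K :=
  if h : z ∈ M then (σ ⟨z, h⟩ : K) else z

/-- The coordinate-wise action of an automorphism on a `0`-chain. -/
def actChain {M : IntermediateField ℂ K} (σ : ↥M ≃ₐ[ℂ] ↥M)
    (γ : (K × K) →₀ ℂ) : (K × K) →₀ ℂ :=
  Finsupp.mapDomain (Prod.map (extendAut σ) (extendAut σ)) γ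

/-- Evaluation of a polynomial `P(X,Y,t)` at `(u, v, 1/S(x,y))` for `(u,v) = a`. -/
def evalPt (St : Finset (ℤ × ℤ)) (w : ℤ × ℤ → ℂ) (x y : K)
    (P : MvPolynomial (Fin 3) ℂ) (a : K × K) : K :=
  MvPolynomial.aeval ![a.1, a.2, (stepEval St w x y)⁻¹] P

/-- Evaluation of a polynomial `P(X,Y,t)` at `(x, y, 1/S(x,y))`. -/
def evalXY (St : Finset (ℤ × ℤ)) (w : ℤ × ℤ → ℂ) (x y : K)
    (P : MvPolynomial (Fin 3) ℂ) : K :=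
  evalPt St w x y P (x, y)

/-- Evaluation of the fraction `A/B` at `(a.1, a.2, 1/S(x,y))`. -/
def fracEval (St : Finset (ℤ × ℤ)) (w : ℤ × ℤ → ℂ) (x y : K)
    (A B : MvPolynomial (Fin 3) ℂ) (a : K × K) : K :=
  evalPt St w x y A a / evalPt St w x y B a

/-- Evaluation (orbit sum) of the fraction `A/B` on a `0`-chain. -/
def chainEval (St : Finset (ℤ × ℤ)) (w : ℤ × ℤ → ℂ) (x y : K)
    (A B : MvPolynomial (Fin 3) ℂ) (γ : (K × K) →₀ ℂ) : K :=
  γ.sum fun a c => algebraMap ℂ K c * fracEval St w x y A B a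

/-- A `0`-chain cancels decoupled fractions: the orbit sum of every regular fraction
of the form `F(X,t) + G(Y,t)` on it vanishes. -/
def CancelsDecoupled (St : Finset (ℤ × ℤ)) (w : ℤ × ℤ → ℂ) (mx my : ℕ)
    (x y : K) (α : (K × K) →₀ ℂ) : Prop :=
  ∀ A₁ B₁ A₂ B₂ : MvPolynomial (Fin 3) ℂ,
    A₁ ∈ MvPolynomial.supported ℂ ({0, 2} : Set (Fin 3)) →
    B₁ ∈ MvPolynomial.supported ℂ ({0, 2} : Set (Fin 3)) →
    A₂ ∈ MvPolynomial.supported ℂ ({1, 2} : Set (Fin 3)) →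
    B₂ ∈ MvPolynomial.supported ℂ ({1, 2} : Set (Fin 3)) →
    ¬ kernelPoly St w mx my ∣ B₁ → ¬ kernelPoly St w mx my ∣ B₂ →
    (α.sum fun a c =>
      algebraMap ℂ K c * (fracEval St w x y A₁ B₁ a + fracEval St w x y A₂ B₂ a)) = 0

/-- The field of fractions `ℂ(X,Y,t)`. -/
abbrev FF : Type := FractionRing (MvPolynomial (Fin 3) ℂ)

/-- The inclusion of `ℂ[X,Y,t]` into `ℂ(X,Y,t)`. -/
def toFF (P : MvPolynomial (Fin 3) ℂ) : FF := algebraMap (MvPolynomial (Fin 3) ℂ) FF P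

/-- The regular fraction `A/B` admits a Galois decoupling:
`A/B = F + G + K̃·R` with `F ∈ ℂ(X,t)`, `G ∈ ℂ(Y,t)` and `R` regular. -/
def AdmitsDecoupling (St : Finset (ℤ × ℤ)) (w : ℤ × ℤ → ℂ) (mx my : ℕ)
    (A B : MvPolynomial (Fin 3) ℂ) : Prop :=
  ∃ F₁ F₂ G₁ G₂ R₁ R₂ : MvPolynomial (Fin 3) ℂ,
    F₁ ∈ MvPolynomial.supported ℂ ({0, 2} : Set (Fin 3)) ∧
    F₂ ∈ MvPolynomial.supported ℂ ({0, 2} : Set (Fin 3)) ∧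
    G₁ ∈ MvPolynomial.supported ℂ ({1, 2} : Set (Fin 3)) ∧
    G₂ ∈ MvPolynomial.supported ℂ ({1, 2} : Set (Fin 3)) ∧
    ¬ kernelPoly St w mx my ∣ F₂ ∧ ¬ kernelPoly St w mx my ∣ G₂ ∧
    ¬ kernelPoly St w mx my ∣ R₂ ∧
    toFF A / toFF B =
      toFF F₁ / toFF F₂ + toFF G₁ / toFF G₂ +
        toFF (kernelPoly St w mx my) * (toFF R₁ / toFF R₂)

/-- `(I, J) = (A/B, Cc/D)` is a pair of Galois invariants: `I - J = K̃·R` with `R` regular. -/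
def IsInvariantPair (St : Finset (ℤ × ℤ)) (w : ℤ × ℤ → ℂ) (mx my : ℕ)
    (A B Cc D : MvPolynomial (Fin 3) ℂ) : Prop :=
  ∃ R₁ R₂ : MvPolynomial (Fin 3) ℂ, ¬ kernelPoly St w mx my ∣ R₂ ∧
    toFF A / toFF B - toFF Cc / toFF D =
      toFF (kernelPoly St w mx my) * (toFF R₁ / toFF R₂)

/-- A constant pair of Galois invariants: both members are equivalent to a
common fraction `c ∈ ℂ(t)` modulo `K̃`. -/
def IsConstantPair (St : Finset (ℤ × ℤ)) (w : ℤ × ℤ → ℂ) (mx my : ℕ)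
    (A B Cc D : MvPolynomial (Fin 3) ℂ) : Prop :=
  IsInvariantPair St w mx my A B Cc D ∧
  ∃ c₁ c₂ : MvPolynomial (Fin 3) ℂ,
    c₁ ∈ MvPolynomial.supported ℂ ({2} : Set (Fin 3)) ∧
    c₂ ∈ MvPolynomial.supported ℂ ({2} : Set (Fin 3)) ∧ c₂ ≠ 0 ∧
    IsInvariantPair St w mx my A B c₁ c₂ ∧ IsInvariantPair St w mx my Cc D c₁ c₂

/-- `(γx, γy)` is a pseudo-decoupling of `(x,y)`. -/
def PseudoDecoupling (St : Finset (ℤ × ℤ)) (w : ℤ × ℤ → ℂ) (mx my : ℕ)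
    (x y : K) (γx γy : (K × K) →₀ ℂ) : Prop :=
  ∀ A B : MvPolynomial (Fin 3) ℂ, ¬ kernelPoly St w mx my ∣ B →
    AdmitsDecoupling St w mx my A B →
      fracEval St w x y A B (x, y) =
          chainEval St w x y A B γx + chainEval St w x y A B γy ∧
        chainEval St w x y A B γx ∈ kxF St w x y ∧
        chainEval St w x y A B γy ∈ kyF St w x y

/-- `(gx, gy, a)` is a decoupling of `(x,y)` in the orbit. -/
def IsDecoupling (St : Finset (ℤ × ℤ)) (w : ℤ × ℤ → ℂ) (mx my : ℕ)
    (x y : K) (gx gy a : (K × K) →₀ ℂ) : Prop :=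
  Finsupp.single (x, y) (1 : ℂ) = gx + gy + a ∧
  (∀ σ ∈ Gx St w x y, actChain σ gx = gx) ∧
  (∀ σ ∈ Gy St w x y, actChain σ gy = gy) ∧
  CancelsDecoupled St w mx my x y a

/-- The `x`-part of the boundary of a `1`-chain. -/
def boundaryX (St : Finset (ℤ × ℤ)) (w : ℤ × ℤ → ℂ)
    (c : ((K × K) × (K × K)) →₀ ℂ) : (K × K) →₀ ℂ :=
  c.sum fun e coeff =>
    if XAdj St w e.1 e.2 then
      coeff • (Finsupp.single e.2 (1 : ℂ) - Finsupp.single e.1 (1 : ℂ)) else 0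

/-- The `y`-part of the boundary of a `1`-chain. -/
def boundaryY (St : Finset (ℤ × ℤ)) (w : ℤ × ℤ → ℂ)
    (c : ((K × K) × (K × K)) →₀ ℂ) : (K × K) →₀ ℂ :=
  c.sum fun e coeff =>
    if YAdj St w e.1 e.2 then
      coeff • (Finsupp.single e.2 (1 : ℂ) - Finsupp.single e.1 (1 : ℂ)) else 0

/-- The `0`-chain induced by a bicolored loop. -/
def IsBicoloredChain (St : Finset (ℤ × ℤ)) (w : ℤ × ℤ → ℂ) (x y : K)
    (α : (K × K) →₀ ℂ) : Prop :=
  ∃ (n : ℕ) (b : ℕ → K × K), 0 < n ∧ b (2 * n) = b 0 ∧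
    (∀ j < 2 * n, b j ∈ orbit St w x y) ∧
    (∀ i < n, XAdj St w (b (2 * i)) (b (2 * i + 1)) ∧
      YAdj St w (b (2 * i + 1)) (b (2 * i + 2))) ∧
    α = ∑ j ∈ Finset.range (2 * n), ((-1 : ℂ) ^ (j + 1)) • Finsupp.single (b j) (1 : ℂ)

/-- The `0`-chain `ω = (1/|𝒪|) ∑_{a ∈ 𝒪} a`. -/
def omegaChain (St : Finset (ℤ × ℤ)) (w : ℤ × ℤ → ℂ) (x y : K)
    (h : (orbit St w x y).Finite) : (K × K) →₀ ℂ :=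
  ((h.toFinset.card : ℂ))⁻¹ • ∑ a ∈ h.toFinset, Finsupp.single a (1 : ℂ)

/-- The average `[G]·γ = (1/|G|) ∑_{σ ∈ G} σ·γ` of a `0`-chain under a group. -/
def groupAverage {M : IntermediateField ℂ K} (G : Subgroup (↥M ≃ₐ[ℂ] ↥M))
    (γ : (K × K) →₀ ℂ) : (K × K) →₀ ℂ :=
  ((Nat.card G : ℂ))⁻¹ • ∑ᶠ σ ∈ (G : Set (↥M ≃ₐ[ℂ] ↥M)), actChain σ γ

/-- `ℂ[X,t]` (two variables: `0` and `1`). -/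
abbrev MvP2 : Type := MvPolynomial (Fin 2) ℂ

/-- `ℂ(X,t)`, the fraction field of `ℂ[X,t]`. -/
abbrev CXt : Type := FractionRing MvP2

/-- Constants `ℂ → ℂ(X,t)`. -/
def cconst : ℂ →+* CXt := (algebraMap MvP2 CXt).comp (MvPolynomial.C)

/-- The first generator of `ℂ(X,t)`. -/
def gen0 : CXt := algebraMap MvP2 CXt (MvPolynomial.X 0)

/-- The second generator of `ℂ(X,t)`. -/
def gen1 : CXt := algebraMap MvP2 CXt (MvPolynomial.X 1)

/-- The kernel polynomial viewed as a polynomial in `Y` over `ℂ(X,t)`. -/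
def kernelInY (St : Finset (ℤ × ℤ)) (w : ℤ × ℤ → ℂ) (mx my : ℕ) :
    Polynomial CXt :=
  MvPolynomial.eval₂ ((Polynomial.C : CXt →+* Polynomial CXt).comp cconst)
    ![Polynomial.C gen0, Polynomial.X, Polynomial.C gen1]
    (kernelPoly St w mx my)

/-- The kernel polynomial viewed as a polynomial in `X` over `ℂ(Y,t)`. -/
def kernelInX (St : Finset (ℤ × ℤ)) (w : ℤ × ℤ → ℂ) (mx my : ℕ) :
    Polynomial CXt :=
  MvPolynomial.eval₂ ((Polynomial.C : CXt →+* Polynomial CXt).comp cconst)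
    ![Polynomial.X, Polynomial.C gen0, Polynomial.C gen1]
    (kernelPoly St w mx my)

/-- The kernel polynomial viewed as a polynomial in `X, Y` over `ℂ(t)`. -/
def kernelInXY (St : Finset (ℤ × ℤ)) (w : ℤ × ℤ → ℂ) (mx my : ℕ) :
    MvPolynomial (Fin 2) (RatFunc ℂ) :=
  MvPolynomial.eval₂
    ((MvPolynomial.C : RatFunc ℂ →+* MvPolynomial (Fin 2) (RatFunc ℂ)).comp
      (RatFunc.C : ℂ →+* RatFunc ℂ))
    ![MvPolynomial.X 0, MvPolynomial.X 1, MvPolynomial.C RatFunc.X]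
    (kernelPoly St w mx my)

/-- The specialization `K̃(x, Y, 1/S(x,y))` as a polynomial in `Y` over `k(x)`. -/
def kernelAtX (St : Finset (ℤ × ℤ)) (w : ℤ × ℤ → ℂ) (mx my : ℕ) (x y : K) :
    Polynomial ↥(kxF St w x y) :=
  MvPolynomial.aeval
    ![Polynomial.C (⟨x, x_mem_kxF St w x y⟩ : kxF St w x y), Polynomial.X,
      Polynomial.C (⟨(stepEval St w x y)⁻¹, inv_mem (S_mem_kxF St w x y)⟩ : kxF St w x y)]
    (kernelPoly St w mx my)

/-- The specialization `K̃(X, y, 1/S(x,y))` as a polynomial in `X` over `k(y)`. -/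
def kernelAtY (St : Finset (ℤ × ℤ)) (w : ℤ × ℤ → ℂ) (mx my : ℕ) (x y : K) :
    Polynomial ↥(kyF St w x y) :=
  MvPolynomial.aeval
    ![Polynomial.X, Polynomial.C (⟨y, y_mem_kyF St w x y⟩ : kyF St w x y),
      Polynomial.C (⟨(stepEval St w x y)⁻¹, inv_mem (S_mem_kyF St w x y)⟩ : kyF St w x y)]
    (kernelPoly St w mx my)

/-- Values of regular fractions with numerator and denominator supported on a set
of variables. -/
def regRange (St : Finset (ℤ × ℤ)) (w : ℤ × ℤ → ℂ) (x y : K) (mx my : ℕ)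
    (s : Set (Fin 3)) : Set K :=
  {z | ∃ A B : MvPolynomial (Fin 3) ℂ,
    A ∈ MvPolynomial.supported ℂ s ∧ B ∈ MvPolynomial.supported ℂ s ∧
    ¬ kernelPoly St w mx my ∣ B ∧ z = evalXY St w x y A / evalXY St w x y B}

end QuadrantWalk
namespace QuadrantWalk

section Aux

variable {K : Type} [Field K] [Algebra ℂ K]

lemma stepEval_orbit (St : Finset (ℤ × ℤ)) (w : ℤ × ℤ → ℂ) (x y : K) {a : K × K}
    (ha : a ∈ orbit St w x y) : stepEval St w a.1 a.2 = stepEval St w x y := by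
  induction ha with
  | refl => rfl
  | tail _ h ih => exact ((h.elim And.right And.right).symm).trans ih

/-- The invariant determining `x`-cliques. -/
def fx (St : Finset (ℤ × ℤ)) (w : ℤ × ℤ → ℂ) (a : K × K) : K × K :=
  (a.1, stepEval St w a.1 a.2)

/-- The invariant determining `y`-cliques. -/
def fy (St : Finset (ℤ × ℤ)) (w : ℤ × ℤ → ℂ) (a : K × K) : K × K :=
  (a.2, stepEval St w a.1 a.2)

lemma xadj_iff_fx (St : Finset (ℤ × ℤ)) (w : ℤ × ℤ → ℂ) (a b : K × K) :
    XAdj St w a b ↔ fx St w a = fx St w b := by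
  simp [XAdj, fx, Prod.ext_iff]

lemma yadj_iff_fy (St : Finset (ℤ × ℤ)) (w : ℤ × ℤ → ℂ) (a b : K × K) :
    YAdj St w a b ↔ fy St w a = fy St w b := by
  simp [YAdj, fy, Prod.ext_iff]

lemma xadj_yadj_eq (St : Finset (ℤ × ℤ)) (w : ℤ × ℤ → ℂ) (a b : K × K)
    (h1 : XAdj St w a b) (h2 : YAdj St w a b) : a = b :=
  Prod.ext h1.1 h2.1

/-- Linear functional summing the coefficients of a `0`-chain over `{a | P a}`. -/
def cliqueL (P : K × K → Prop) : ((K × K) →₀ ℂ) →ₗ[ℂ] ℂ :=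
  Finsupp.lsum ℂ fun a => if P a then LinearMap.id else 0

lemma cliqueL_eq (P : K × K → Prop) (γ : (K × K) →₀ ℂ) :
    cliqueL P γ = ∑ a ∈ γ.support, (if P a then γ a else 0) := by
  rw [cliqueL, Finsupp.lsum_apply, Finsupp.sum]
  refine Finset.sum_congr rfl fun a _ => ?_
  by_cases h : P a <;> simp [h]

lemma cliqueL_single (P : K × K → Prop) (a : K × K) (z : ℂ) :
    cliqueL P (Finsupp.single a z) = if P a then z else 0 := by
  rw [cliqueL, Finsupp.lsum_apply, Finsupp.sum_single_index (by simp)]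
  by_cases h : P a <;> simp [h]

/-- Linear version of the boundary operator attached to an adjacency `P`. -/
def bdryL (P : K × K → K × K → Prop) :
    (((K × K) × (K × K)) →₀ ℂ) →ₗ[ℂ] ((K × K) →₀ ℂ) :=
  Finsupp.lsum ℂ fun e =>
    if P e.1 e.2 then
      LinearMap.toSpanSingleton ℂ _ (Finsupp.single e.2 (1 : ℂ) - Finsupp.single e.1 1)
    else 0

lemma bdryL_single (P : K × K → K × K → Prop) (e : (K × K) × (K × K)) (z : ℂ) :
    bdryL P (Finsupp.single e z) =
      if P e.1 e.2 then z • (Finsupp.single e.2 (1 : ℂ) - Finsupp.single e.1 1) else 0 := by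
  rw [bdryL, Finsupp.lsum_apply, Finsupp.sum_single_index (by simp)]
  by_cases h : P e.1 e.2 <;> simp [h, LinearMap.toSpanSingleton_apply]

lemma boundaryX_eq (St : Finset (ℤ × ℤ)) (w : ℤ × ℤ → ℂ)
    (c : ((K × K) × (K × K)) →₀ ℂ) : boundaryX St w c = bdryL (XAdj St w) c := by
  rw [boundaryX, bdryL, Finsupp.lsum_apply, Finsupp.sum, Finsupp.sum]
  refine Finset.sum_congr rfl fun e _ => ?_
  by_cases h : XAdj St w e.1 e.2 <;> simp [h, LinearMap.toSpanSingleton_apply]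

lemma boundaryY_eq (St : Finset (ℤ × ℤ)) (w : ℤ × ℤ → ℂ)
    (c : ((K × K) × (K × K)) →₀ ℂ) : boundaryY St w c = bdryL (YAdj St w) c := by
  rw [boundaryY, bdryL, Finsupp.lsum_apply, Finsupp.sum, Finsupp.sum]
  refine Finset.sum_congr rfl fun e _ => ?_
  by_cases h : YAdj St w e.1 e.2 <;> simp [h, LinearMap.toSpanSingleton_apply]

/-- Clique sums of boundaries vanish. -/
lemma cliqueL_bdryL {P : K × K → K × K → Prop} {f : K × K → K × K}
    (hPf : ∀ a b, P a b ↔ f a = f b) (c : ((K × K) × (K × K)) →₀ ℂ) (b : K × K) :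
    cliqueL (P · b) (bdryL P c) = 0 := by
  rw [bdryL, Finsupp.lsum_apply, Finsupp.sum, map_sum]
  refine Finset.sum_eq_zero fun e _ => ?_
  by_cases h : P e.1 e.2
  · have h12 : f e.1 = f e.2 := (hPf _ _).1 h
    have hiff : P e.2 b ↔ P e.1 b := by rw [hPf, hPf, h12]
    simp only [h, if_true, LinearMap.toSpanSingleton_apply, map_smul, map_sub,
      cliqueL_single, smul_eq_mul]
    rw [if_congr hiff rfl rfl, sub_self, mul_zero]
  · simp [h]

/-- Sum of coefficients times the indicator single of the representative vanishes. -/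
lemma rep_sum_zero {P : K × K → K × K → Prop} {f : K × K → K × K} {O : Set (K × K)}
    (hPf : ∀ a b, P a b ↔ f a = f b) (α : (K × K) →₀ ℂ) (hα : ↑α.support ⊆ O)
    (hsP : ∀ b ∈ O, cliqueL (P · b) α = 0) {r : K × K → K × K}
    (hrmem : ∀ a ∈ O, r a ∈ O) (hrf : ∀ a ∈ O, f (r a) = f a)
    (hrcong : ∀ a b, f a = f b → r a = r b) :
    ∑ a ∈ α.support, α a • Finsupp.single (r a) (1 : ℂ) = 0 := by
  ext b
  rw [Finsupp.finset_sum_apply, Finsupp.coe_zero, Pi.zero_apply]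
  have hterm : ∀ a ∈ α.support,
      (α a • Finsupp.single (r a) (1 : ℂ)) b = if r a = b then α a else 0 := by
    intro a _
    rw [Finsupp.smul_apply, Finsupp.single_apply]
    by_cases h : r a = b <;> simp [h]
  rw [Finset.sum_congr rfl hterm]
  by_cases hex : ∃ a0 ∈ α.support, r a0 = b
  · obtain ⟨a0, ha0, hb⟩ := hex
    have ha0O : a0 ∈ O := hα ha0
    have hbO : b ∈ O := hb ▸ hrmem a0 ha0O
    have key : ∀ a ∈ α.support, (r a = b) ↔ P a b := by
      intro a ha
      have haO : a ∈ O := hα ha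
      constructor
      · intro h
        refine (hPf a b).2 ?_
        rw [← h, hrf a haO]
      · intro h
        have hfa : f a = f b := (hPf a b).1 h
        rw [hrcong a b hfa, ← hb, hrcong (r a0) a0 (hrf a0 ha0O), hb]
    have hcl := hsP b hbO
    rw [cliqueL_eq] at hcl
    rw [show (∑ a ∈ α.support, if r a = b then α a else 0) =
        ∑ a ∈ α.support, (if P a b then α a else 0) from
      Finset.sum_congr rfl fun a ha => if_congr (key a ha) rfl rfl]
    exact hcl
  · exact Finset.sum_eq_zero fun a ha => if_neg fun h => hex ⟨a, ha, h⟩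

/-- Generic construction of a `1`-cycle with prescribed `P`-boundary. -/
lemma exists_cycle {P Q : K × K → K × K → Prop} {f g : K × K → K × K} {O : Set (K × K)}
    (hPf : ∀ a b, P a b ↔ f a = f b) (hQg : ∀ a b, Q a b ↔ g a = g b)
    (hPQ : ∀ a b, P a b → Q a b → a = b)
    (α : (K × K) →₀ ℂ) (hα : ↑α.support ⊆ O)
    (hsP : ∀ b ∈ O, cliqueL (P · b) α = 0)
    (hsQ : ∀ b ∈ O, cliqueL (Q · b) α = 0) :
    ∃ c : ((K × K) × (K × K)) →₀ ℂ,
      (∀ e ∈ c.support, e.1 ∈ O ∧ e.2 ∈ O ∧ (P e.1 e.2 ∨ Q e.1 e.2)) ∧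
      bdryL P c + bdryL Q c = 0 ∧ bdryL P c = α := by
  set r : K × K → K × K := fun a => Function.invFunOn f O (f a) with hrdef
  set s : K × K → K × K := fun a => Function.invFunOn g O (g a) with hsdef
  have hrmem : ∀ a ∈ O, r a ∈ O := fun a ha => Function.invFunOn_mem ⟨a, ha, rfl⟩
  have hrf : ∀ a ∈ O, f (r a) = f a := fun a ha => Function.invFunOn_eq ⟨a, ha, rfl⟩
  have hrcong : ∀ a b : K × K, f a = f b → r a = r b := by
    intro a b h
    simp only [hrdef]
    rw [h]
  have hsmem : ∀ a ∈ O, s a ∈ O := fun a ha => Function.invFunOn_mem ⟨a, ha, rfl⟩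
  have hsg : ∀ a ∈ O, g (s a) = g a := fun a ha => Function.invFunOn_eq ⟨a, ha, rfl⟩
  have hscong : ∀ a b : K × K, g a = g b → s a = s b := by
    intro a b h
    simp only [hsdef]
    rw [h]
  set cx : ((K × K) × (K × K)) →₀ ℂ :=
    α.sum fun a z => Finsupp.single ((r a, a) : (K × K) × (K × K)) z with hcx
  set cy : ((K × K) × (K × K)) →₀ ℂ :=
    α.sum fun a z => Finsupp.single ((a, s a) : (K × K) × (K × K)) z with hcy
  have hid : ∑ a ∈ α.support, α a • Finsupp.single a (1 : ℂ) = α := by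
    have h' : ∀ a ∈ α.support, α a • Finsupp.single a (1 : ℂ) = Finsupp.single a (α a) := by
      intro a _
      rw [Finsupp.smul_single', mul_one]
    rw [Finset.sum_congr rfl h']
    exact Finsupp.sum_single α
  have hbPx : bdryL P cx = α := by
    rw [hcx, map_finsuppSum, Finsupp.sum]
    have h' : ∀ a ∈ α.support,
        bdryL P (Finsupp.single ((r a, a) : (K × K) × (K × K)) (α a)) =
          α a • Finsupp.single a (1 : ℂ) - α a • Finsupp.single (r a) (1 : ℂ) := by
      intro a ha
      rw [bdryL_single]
      have hP : P (r a) a := (hPf _ _).2 (hrf a (hα ha))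
      rw [if_pos hP, smul_sub]
    rw [Finset.sum_congr rfl h', Finset.sum_sub_distrib, hid,
      rep_sum_zero hPf α hα hsP hrmem hrf hrcong, sub_zero]
  have hbQy : bdryL Q cy = -α := by
    rw [hcy, map_finsuppSum, Finsupp.sum]
    have h' : ∀ a ∈ α.support,
        bdryL Q (Finsupp.single ((a, s a) : (K × K) × (K × K)) (α a)) =
          α a • Finsupp.single (s a) (1 : ℂ) - α a • Finsupp.single a (1 : ℂ) := by
      intro a ha
      rw [bdryL_single]
      have hQ : Q a (s a) := (hQg _ _).2 (hsg a (hα ha)).symm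
      rw [if_pos hQ, smul_sub]
    rw [Finset.sum_congr rfl h', Finset.sum_sub_distrib, hid,
      rep_sum_zero hQg α hα hsQ hsmem hsg hscong, zero_sub]
  have hbQx : bdryL Q cx = 0 := by
    rw [hcx, map_finsuppSum, Finsupp.sum]
    refine Finset.sum_eq_zero fun a ha => ?_
    rw [bdryL_single]
    by_cases hQ : Q (r a) a
    · have hP : P (r a) a := (hPf _ _).2 (hrf a (hα ha))
      have hra : r a = a := hPQ _ _ hP hQ
      rw [if_pos hQ, hra, sub_self, smul_zero]
    · rw [if_neg hQ]
  have hbPy : bdryL P cy = 0 := by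
    rw [hcy, map_finsuppSum, Finsupp.sum]
    refine Finset.sum_eq_zero fun a ha => ?_
    rw [bdryL_single]
    by_cases hP : P a (s a)
    · have hQ : Q a (s a) := (hQg _ _).2 (hsg a (hα ha)).symm
      have has : a = s a := hPQ _ _ hP hQ
      rw [if_pos hP, ← has, sub_self, smul_zero]
    · rw [if_neg hP]
  refine ⟨cx + cy, ?_, ?_, ?_⟩
  · intro e he
    have hmem := Finsupp.support_add he
    rw [Finset.mem_union] at hmem
    rcases hmem with he' | he'
    · have hmem2 := Finsupp.support_sum he'
      rw [Finset.mem_biUnion] at hmem2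
      obtain ⟨a, ha, hea⟩ := hmem2
      have hee : e = (r a, a) := Finset.mem_singleton.1 (Finsupp.support_single_subset hea)
      subst hee
      exact ⟨hrmem a (hα ha), hα ha, Or.inl ((hPf _ _).2 (hrf a (hα ha)))⟩
    · have hmem2 := Finsupp.support_sum he'
      rw [Finset.mem_biUnion] at hmem2
      obtain ⟨a, ha, hea⟩ := hmem2
      have hee : e = (a, s a) := Finset.mem_singleton.1 (Finsupp.support_single_subset hea)
      subst hee
      exact ⟨hα ha, hsmem a (hα ha), Or.inr ((hQg _ _).2 (hsg a (hα ha)).symm)⟩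
  · rw [map_add, map_add, hbPx, hbPy, hbQx, hbQy]
    abel
  · rw [map_add, hbPx, hbPy, add_zero]

end Aux

section Aux2

variable {K : Type} [Field K] [Algebra ℂ K]

/-- Vandermonde / Lagrange step: vanishing of all power sums kills each fiber sum. -/
lemma vand {T : Finset (K × K)} {g : K × K → ℂ} {proj : K × K → K}
    (H : ∀ n : ℕ, ∑ a ∈ T, algebraMap ℂ K (g a) * proj a ^ n = 0) (u : K) :
    ∑ a ∈ T, (if proj a = u then g a else 0) = 0 := by
  have HP : ∀ Pl : Polynomial K,
      ∑ a ∈ T, algebraMap ℂ K (g a) * Pl.eval (proj a) = 0 := by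
    intro Pl
    have expand : ∀ a ∈ T, algebraMap ℂ K (g a) * Pl.eval (proj a) =
        ∑ n ∈ Finset.range (Pl.natDegree + 1),
          Pl.coeff n * (algebraMap ℂ K (g a) * proj a ^ n) := by
      intro a _
      rw [Polynomial.eval_eq_sum_range, Finset.mul_sum]
      exact Finset.sum_congr rfl fun n _ => by ring
    rw [Finset.sum_congr rfl expand, Finset.sum_comm]
    refine Finset.sum_eq_zero fun n _ => ?_
    rw [← Finset.mul_sum, H n, mul_zero]
  have HK : ∑ a ∈ T, (if proj a = u then algebraMap ℂ K (g a) else 0) = 0 := by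
    by_cases hu : u ∈ T.image proj
    · have hbasis := HP (Lagrange.basis (T.image proj) id u)
      have heval : ∀ a ∈ T,
          algebraMap ℂ K (g a) * (Lagrange.basis (T.image proj) id u).eval (proj a) =
            (if proj a = u then algebraMap ℂ K (g a) else 0) := by
        intro a ha
        by_cases h : proj a = u
        · rw [if_pos h, h]
          have hb1 : Polynomial.eval u (Lagrange.basis (T.image proj) id u) = 1 := by
            have := Lagrange.eval_basis_self (v := (id : K → K)) (Set.injOn_id _) hu
            simpa using this
          rw [hb1, mul_one]
        · rw [if_neg h]
          have hb0 : Polynomial.eval (proj a) (Lagrange.basis (T.image proj) id u) = 0 := by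
            have := Lagrange.eval_basis_of_ne (v := (id : K → K)) (fun hc => h hc.symm)
              (Finset.mem_image_of_mem proj ha)
            simpa using this
          rw [hb0, mul_zero]
      rw [Finset.sum_congr rfl heval] at hbasis
      exact hbasis
    · refine Finset.sum_eq_zero fun a ha => if_neg fun h => hu ?_
      rw [← h]; exact Finset.mem_image_of_mem proj ha
  have hmap : (algebraMap ℂ K) (∑ a ∈ T, (if proj a = u then g a else 0)) = 0 := by
    rw [map_sum]
    rw [show (∑ a ∈ T, algebraMap ℂ K (if proj a = u then g a else 0)) =
        ∑ a ∈ T, (if proj a = u then algebraMap ℂ K (g a) else 0) from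
      Finset.sum_congr rfl fun a _ => by by_cases h : proj a = u <;> simp [h]]
    exact HK
  exact (algebraMap ℂ K).injective (by rw [hmap, map_zero])

/-- Conversely, vanishing fiber sums kill sums of functions of the projection. -/
lemma fiber_group {T : Finset (K × K)} {g : K × K → ℂ} {proj : K × K → K}
    (hfib : ∀ u : K, ∑ a ∈ T, (if proj a = u then g a else 0) = 0) (h : K → K) :
    ∑ a ∈ T, algebraMap ℂ K (g a) * h (proj a) = 0 := by
  rw [← Finset.sum_fiberwise_of_maps_to (fun a ha => Finset.mem_image_of_mem proj ha)
    (fun a => algebraMap ℂ K (g a) * h (proj a))]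
  refine Finset.sum_eq_zero fun u _ => ?_
  have hcongr : ∀ a ∈ T.filter (fun a => proj a = u),
      algebraMap ℂ K (g a) * h (proj a) = algebraMap ℂ K (g a) * h u := by
    intro a ha
    rw [(Finset.mem_filter.1 ha).2]
  rw [Finset.sum_congr rfl hcongr, ← Finset.sum_mul]
  have hz : ∑ a ∈ T.filter (fun a => proj a = u), algebraMap ℂ K (g a) = 0 := by
    rw [Finset.sum_filter]
    rw [show (∑ a ∈ T, if proj a = u then algebraMap ℂ K (g a) else 0) =
        algebraMap ℂ K (∑ a ∈ T, (if proj a = u then g a else 0)) by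
      rw [map_sum]
      exact Finset.sum_congr rfl fun a _ => by by_cases h' : proj a = u <;> simp [h']]
    rw [hfib u, map_zero]
  rw [hz, zero_mul]

/-- Clique sums vanish iff fiber sums of the projection vanish. -/
lemma fib_iff {P : K × K → K × K → Prop} {proj : K × K → K} {O : Set (K × K)}
    (α : (K × K) →₀ ℂ) (hα : ↑α.support ⊆ O)
    (hP : ∀ a b, a ∈ O → b ∈ O → (P a b ↔ proj a = proj b)) :
    (∀ b ∈ O, (α.sum fun a c => if P a b then c else 0) = 0) ↔
      (∀ u : K, ∑ a ∈ α.support, (if proj a = u then α a else 0) = 0) := by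
  constructor
  · intro hcl u
    by_cases hex : ∃ a0 ∈ α.support, proj a0 = u
    · obtain ⟨a0, ha0, rfl⟩ := hex
      have hcl' := hcl a0 (hα ha0)
      rw [Finsupp.sum] at hcl'
      rw [show (∑ a ∈ α.support, if proj a = proj a0 then α a else 0) =
          ∑ a ∈ α.support, (if P a a0 then α a else 0) from
        Finset.sum_congr rfl fun a ha => if_congr (hP a a0 (hα ha) (hα ha0)).symm rfl rfl]
      exact hcl'
    · exact Finset.sum_eq_zero fun a ha => if_neg fun h => hex ⟨a, ha, h⟩
  · intro hfib b hb
    rw [Finsupp.sum]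
    rw [show (∑ a ∈ α.support, if P a b then α a else 0) =
        ∑ a ∈ α.support, (if proj a = proj b then α a else 0) from
      Finset.sum_congr rfl fun a ha => if_congr (hP a b (hα ha) hb) rfl rfl]
    exact hfib (proj b)

lemma aeval_supported_02 {P : MvPolynomial (Fin 3) ℂ}
    (hP : P ∈ MvPolynomial.supported ℂ ({0, 2} : Set (Fin 3))) (u v v' s : K) :
    MvPolynomial.aeval ![u, v, s] P = MvPolynomial.aeval ![u, v', s] P := by
  rw [MvPolynomial.supported_eq_range_rename, AlgHom.mem_range] at hP
  obtain ⟨Q, rfl⟩ := hP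
  rw [MvPolynomial.aeval_rename, MvPolynomial.aeval_rename]
  have : (![u, v, s] ∘ (Subtype.val : ({0, 2} : Set (Fin 3)) → Fin 3)) =
      ![u, v', s] ∘ Subtype.val := by
    funext i
    obtain ⟨i, hi⟩ := i
    rcases hi with hi | hi
    · subst hi; rfl
    · rw [Set.mem_singleton_iff] at hi; subst hi; rfl
  rw [this]

lemma aeval_supported_12 {P : MvPolynomial (Fin 3) ℂ}
    (hP : P ∈ MvPolynomial.supported ℂ ({1, 2} : Set (Fin 3))) (u u' v s : K) :
    MvPolynomial.aeval ![u, v, s] P = MvPolynomial.aeval ![u', v, s] P := by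
  rw [MvPolynomial.supported_eq_range_rename, AlgHom.mem_range] at hP
  obtain ⟨Q, rfl⟩ := hP
  rw [MvPolynomial.aeval_rename, MvPolynomial.aeval_rename]
  have : (![u, v, s] ∘ (Subtype.val : ({1, 2} : Set (Fin 3)) → Fin 3)) =
      ![u', v, s] ∘ Subtype.val := by
    funext i
    obtain ⟨i, hi⟩ := i
    rcases hi with hi | hi
    · subst hi; rfl
    · rw [Set.mem_singleton_iff] at hi; subst hi; rfl
  rw [this]

/-- The kernel polynomial does not divide `1`. -/
lemma kernelPoly_not_dvd_one (St : Finset (ℤ × ℤ)) (w : ℤ × ℤ → ℂ) (mx my : ℕ)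
    (x y : K) (hset : Setting St w x y) (hb : ExponentBounds St mx my) :
    ¬ kernelPoly St w mx my ∣ 1 := by
  obtain ⟨p0, hp0, -⟩ := hset.notUniv.1
  set E1 : ℤ × ℤ → ℕ := fun p => (p.1 + (mx : ℤ)).toNat with hE1
  set E2 : ℤ × ℤ → ℕ := fun p => (p.2 + (my : ℤ)).toNat with hE2
  set P2 : MvPolynomial (Fin 2) ℂ :=
    ∑ p ∈ St, MvPolynomial.C (w p) * MvPolynomial.X 0 ^ E1 p * MvPolynomial.X 1 ^ E2 p
    with hP2def
  have hP2 : P2 ≠ 0 := by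
    intro h0
    have hmono : ∀ p : ℤ × ℤ,
        (MvPolynomial.C (w p) * MvPolynomial.X 0 ^ E1 p * MvPolynomial.X 1 ^ E2 p :
          MvPolynomial (Fin 2) ℂ) =
        MvPolynomial.monomial (Finsupp.single 0 (E1 p) + Finsupp.single 1 (E2 p)) (w p) := by
      intro p
      rw [MvPolynomial.X_pow_eq_monomial, MvPolynomial.X_pow_eq_monomial,
        MvPolynomial.C_apply, MvPolynomial.monomial_mul, MvPolynomial.monomial_mul,
        zero_add, mul_one, mul_one]
    have hco : MvPolynomial.coeff
        (Finsupp.single 0 (E1 p0) + Finsupp.single 1 (E2 p0)) P2 = w p0 := by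
      rw [hP2def, MvPolynomial.coeff_sum]
      rw [Finset.sum_congr rfl fun p (_ : p ∈ St) => by
        rw [hmono p, MvPolynomial.coeff_monomial]]
      rw [Finset.sum_eq_single p0]
      · rw [if_pos rfl]
      · intro p hp hne
        rw [if_neg]
        intro heq
        have h1 : E1 p = E1 p0 := by
          have := DFunLike.congr_fun heq (0 : Fin 2)
          simpa [Finsupp.single_apply] using this
        have h2 : E2 p = E2 p0 := by
          have := DFunLike.congr_fun heq (1 : Fin 2)
          simpa [Finsupp.single_apply] using this
        have hx1 := hb.lowerX p hp
        have hx2 := hb.lowerX p0 hp0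
        have hy1 := hb.lowerY p hp
        have hy2 := hb.lowerY p0 hp0
        rw [hE1] at h1
        rw [hE2] at h2
        simp only at h1 h2
        exact hne (Prod.ext (by omega) (by omega))
      · intro h; exact absurd hp0 h
    rw [h0, MvPolynomial.coeff_zero] at hco
    exact hset.weight_ne p0 hp0 hco.symm
  have hBv : (MvPolynomial.aeval ![x, y] P2 : K) ≠ 0 := by
    intro h
    exact hP2 (hset.indep (show MvPolynomial.aeval ![x, y] P2 =
      MvPolynomial.aeval ![x, y] 0 by rw [map_zero, h]))
  set Bv : K := MvPolynomial.aeval ![x, y] P2 with hBvdef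
  set t0 : K := (x ^ mx * y ^ my) / Bv with ht0
  rintro ⟨q, hq⟩
  have happ := congrArg (MvPolynomial.aeval ![x, y, t0] :
    MvPolynomial (Fin 3) ℂ → K) hq
  rw [map_one, map_mul] at happ
  have hsum : MvPolynomial.aeval ![x, y, t0]
      (∑ p ∈ St, MvPolynomial.C (w p) *
        MvPolynomial.X 0 ^ (p.1 + (mx : ℤ)).toNat *
        MvPolynomial.X 1 ^ (p.2 + (my : ℤ)).toNat) = Bv := by
    rw [hBvdef, hP2def]
    simp only [map_sum, map_mul, map_pow, MvPolynomial.aeval_C, MvPolynomial.aeval_X,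
      Matrix.cons_val_zero, Matrix.cons_val_one, Matrix.head_cons]
    rfl
  have hk0 : MvPolynomial.aeval ![x, y, t0] (kernelPoly St w mx my) = 0 := by
    rw [kernelPoly]
    simp only [map_sub, map_mul, map_pow]
    rw [hsum]
    simp only [MvPolynomial.aeval_X, Matrix.cons_val_zero, Matrix.cons_val_one,
      Matrix.head_cons, Matrix.cons_val_two, Matrix.tail_cons]
    rw [ht0, div_mul_cancel₀ _ hBv, sub_self]
  rw [hk0, zero_mul] at happ
  exact one_ne_zero happ

end Aux2

/-- a `0`-chain `α` of the orbit cancels decoupled fractions iff its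
coefficients sum to zero on every `x`-clique and on every `y`-clique, iff it is the
`x`-boundary (equivalently the `y`-boundary) of a `1`-cycle of the orbit graph. -/
theorem stmt15 {K : Type} [Field K] [Algebra ℂ K]
    (St : Finset (ℤ × ℤ)) (w : ℤ × ℤ → ℂ) (x y : K) (mx my : ℕ)
    (hset : Setting St w x y) (hb : ExponentBounds St mx my)
    (α : (K × K) →₀ ℂ) (hα : ↑α.support ⊆ orbit St w x y) :
    (CancelsDecoupled St w mx my x y α ↔
      ((∀ b ∈ orbit St w x y,
          (α.sum fun a c => if XAdj St w a b then c else 0) = 0) ∧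
       (∀ b ∈ orbit St w x y,
          (α.sum fun a c => if YAdj St w a b then c else 0) = 0))) ∧
    (CancelsDecoupled St w mx my x y α ↔
      ∃ c : ((K × K) × (K × K)) →₀ ℂ,
        (∀ e ∈ c.support,
          e.1 ∈ orbit St w x y ∧ e.2 ∈ orbit St w x y ∧ Adj St w e.1 e.2) ∧
        boundaryX St w c + boundaryY St w c = 0 ∧ boundaryX St w c = α) ∧
    (CancelsDecoupled St w mx my x y α ↔
      ∃ c : ((K × K) × (K × K)) →₀ ℂ,
        (∀ e ∈ c.support,
          e.1 ∈ orbit St w x y ∧ e.2 ∈ orbit St w x y ∧ Adj St w e.1 e.2) ∧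
        boundaryX St w c + boundaryY St w c = 0 ∧ boundaryY St w c = α) := by
  classical
  have horb : ∀ a ∈ orbit St w x y, stepEval St w a.1 a.2 = stepEval St w x y :=
    fun a ha => stepEval_orbit St w x y ha
  have hxP : ∀ a b : K × K, a ∈ orbit St w x y → b ∈ orbit St w x y →
      (XAdj St w a b ↔ a.1 = b.1) := by
    intro a b ha hb'
    exact ⟨And.left, fun h => ⟨h, (horb a ha).trans (horb b hb').symm⟩⟩
  have hyP : ∀ a b : K × K, a ∈ orbit St w x y → b ∈ orbit St w x y →
      (YAdj St w a b ↔ a.2 = b.2) := by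
    intro a b ha hb'
    exact ⟨And.left, fun h => ⟨h, (horb a ha).trans (horb b hb').symm⟩⟩
  have hker := kernelPoly_not_dvd_one St w mx my x y hset hb
  have hfibx := fib_iff (P := XAdj St w) (proj := Prod.fst) (O := orbit St w x y) α hα hxP
  have hfiby := fib_iff (P := YAdj St w) (proj := Prod.snd) (O := orbit St w x y) α hα hyP
  have h12 : CancelsDecoupled St w mx my x y α ↔
      ((∀ b ∈ orbit St w x y,
          (α.sum fun a c => if XAdj St w a b then c else 0) = 0) ∧
       (∀ b ∈ orbit St w x y,
          (α.sum fun a c => if YAdj St w a b then c else 0) = 0)) := by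
    constructor
    · intro hc
      have hpowx : ∀ n : ℕ, ∑ a ∈ α.support, algebraMap ℂ K (α a) * a.1 ^ n = 0 := by
        intro n
        have hm1 : (MvPolynomial.X 0 : MvPolynomial (Fin 3) ℂ) ^ n ∈
            MvPolynomial.supported ℂ ({0, 2} : Set (Fin 3)) :=
          pow_mem (MvPolynomial.X_mem_supported.2 (by simp)) n
        have h1 := hc (MvPolynomial.X 0 ^ n) 1 0 1 hm1 (one_mem _) (zero_mem _)
          (one_mem _) hker hker
        rw [Finsupp.sum] at h1
        rw [← h1]
        refine Finset.sum_congr rfl fun a _ => ?_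
        simp [fracEval, evalPt]
      have hpowy : ∀ n : ℕ, ∑ a ∈ α.support, algebraMap ℂ K (α a) * a.2 ^ n = 0 := by
        intro n
        have hm1 : (MvPolynomial.X 1 : MvPolynomial (Fin 3) ℂ) ^ n ∈
            MvPolynomial.supported ℂ ({1, 2} : Set (Fin 3)) :=
          pow_mem (MvPolynomial.X_mem_supported.2 (by simp)) n
        have h1 := hc 0 1 (MvPolynomial.X 1 ^ n) 1 (zero_mem _) (one_mem _) hm1
          (one_mem _) hker hker
        rw [Finsupp.sum] at h1
        rw [← h1]
        refine Finset.sum_congr rfl fun a _ => ?_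
        simp [fracEval, evalPt]
      exact ⟨hfibx.2 fun u => vand hpowx u, hfiby.2 fun u => vand hpowy u⟩
    · intro h2
      intro A₁ B₁ A₂ B₂ hA1 hB1 hA2 hB2 _ _
      rw [Finsupp.sum]
      rw [Finset.sum_congr rfl fun (a : K × K) (_ : a ∈ α.support) =>
        mul_add (algebraMap ℂ K (α a)) (fracEval St w x y A₁ B₁ a)
          (fracEval St w x y A₂ B₂ a)]
      rw [Finset.sum_add_distrib]
      set F1 : K → K := fun u =>
        MvPolynomial.aeval ![u, x, (stepEval St w x y)⁻¹] A₁ /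
          MvPolynomial.aeval ![u, x, (stepEval St w x y)⁻¹] B₁ with hF1
      set F2 : K → K := fun v =>
        MvPolynomial.aeval ![x, v, (stepEval St w x y)⁻¹] A₂ /
          MvPolynomial.aeval ![x, v, (stepEval St w x y)⁻¹] B₂ with hF2
      have hx0 : ∑ a ∈ α.support,
          algebraMap ℂ K (α a) * fracEval St w x y A₁ B₁ a = 0 := by
        have hdep : ∀ a ∈ α.support, algebraMap ℂ K (α a) * fracEval St w x y A₁ B₁ a
            = algebraMap ℂ K (α a) * F1 a.1 := by
          intro a _
          simp only [hF1, fracEval, evalPt]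
          rw [aeval_supported_02 hA1 a.1 a.2 x ((stepEval St w x y)⁻¹),
            aeval_supported_02 hB1 a.1 a.2 x ((stepEval St w x y)⁻¹)]
        rw [Finset.sum_congr rfl hdep]
        exact fiber_group (hfibx.1 h2.1) F1
      have hy0 : ∑ a ∈ α.support,
          algebraMap ℂ K (α a) * fracEval St w x y A₂ B₂ a = 0 := by
        have hdep : ∀ a ∈ α.support, algebraMap ℂ K (α a) * fracEval St w x y A₂ B₂ a
            = algebraMap ℂ K (α a) * F2 a.2 := by
          intro a _
          simp only [hF2, fracEval, evalPt]
          rw [aeval_supported_12 hA2 a.1 x a.2 ((stepEval St w x y)⁻¹),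
            aeval_supported_12 hB2 a.1 x a.2 ((stepEval St w x y)⁻¹)]
        rw [Finset.sum_congr rfl hdep]
        exact fiber_group (hfiby.1 h2.2) F2
      rw [hx0, hy0, add_zero]
  have h23 : ((∀ b ∈ orbit St w x y,
          (α.sum fun a c => if XAdj St w a b then c else 0) = 0) ∧
       (∀ b ∈ orbit St w x y,
          (α.sum fun a c => if YAdj St w a b then c else 0) = 0)) ↔
      (∃ c : ((K × K) × (K × K)) →₀ ℂ,
        (∀ e ∈ c.support,
          e.1 ∈ orbit St w x y ∧ e.2 ∈ orbit St w x y ∧ Adj St w e.1 e.2) ∧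
        boundaryX St w c + boundaryY St w c = 0 ∧ boundaryX St w c = α) := by
    constructor
    · rintro ⟨h2x, h2y⟩
      obtain ⟨c, hc1, hc2, hc3⟩ := exists_cycle (xadj_iff_fx St w) (yadj_iff_fy St w)
        (xadj_yadj_eq St w) α hα
        (fun b hb' => by rw [cliqueL_eq]; exact h2x b hb')
        (fun b hb' => by rw [cliqueL_eq]; exact h2y b hb')
      exact ⟨c, hc1, by rw [boundaryX_eq, boundaryY_eq]; exact hc2,
        by rw [boundaryX_eq]; exact hc3⟩
    · rintro ⟨c, hc1, hc2, hc3⟩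
      rw [boundaryX_eq, boundaryY_eq] at hc2
      rw [boundaryX_eq] at hc3
      constructor
      · intro b hb'
        have h0 := cliqueL_bdryL (xadj_iff_fx St w) c b
        rw [hc3] at h0
        rw [cliqueL_eq] at h0
        exact h0
      · intro b hb'
        have hneg : bdryL (XAdj St w) c = -bdryL (YAdj St w) c :=
          eq_neg_of_add_eq_zero_left hc2
        have h0 := cliqueL_bdryL (yadj_iff_fy St w) c b
        have h' : cliqueL (YAdj St w · b) α = 0 := by
          rw [← hc3, hneg, map_neg, h0, neg_zero]
        rw [cliqueL_eq] at h'
        exact h'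
  have h23' : ((∀ b ∈ orbit St w x y,
          (α.sum fun a c => if XAdj St w a b then c else 0) = 0) ∧
       (∀ b ∈ orbit St w x y,
          (α.sum fun a c => if YAdj St w a b then c else 0) = 0)) ↔
      (∃ c : ((K × K) × (K × K)) →₀ ℂ,
        (∀ e ∈ c.support,
          e.1 ∈ orbit St w x y ∧ e.2 ∈ orbit St w x y ∧ Adj St w e.1 e.2) ∧
        boundaryX St w c + boundaryY St w c = 0 ∧ boundaryY St w c = α) := by
    constructor
    · rintro ⟨h2x, h2y⟩
      obtain ⟨c, hc1, hc2, hc3⟩ := exists_cycle (yadj_iff_fy St w) (xadj_iff_fx St w)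
        (fun a b h1 h2 => xadj_yadj_eq St w a b h2 h1) α hα
        (fun b hb' => by rw [cliqueL_eq]; exact h2y b hb')
        (fun b hb' => by rw [cliqueL_eq]; exact h2x b hb')
      refine ⟨c, ?_, ?_, ?_⟩
      · intro e he
        obtain ⟨he1, he2, he3⟩ := hc1 e he
        exact ⟨he1, he2, he3.symm⟩
      · rw [boundaryX_eq, boundaryY_eq, add_comm]; exact hc2
      · rw [boundaryY_eq]; exact hc3
    · rintro ⟨c, hc1, hc2, hc3⟩
      rw [boundaryX_eq, boundaryY_eq] at hc2
      rw [boundaryY_eq] at hc3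
      constructor
      · intro b hb'
        have hneg : bdryL (YAdj St w) c = -bdryL (XAdj St w) c :=
          eq_neg_of_add_eq_zero_right hc2
        have h0 := cliqueL_bdryL (xadj_iff_fx St w) c b
        have h' : cliqueL (XAdj St w · b) α = 0 := by
          rw [← hc3, hneg, map_neg, h0, neg_zero]
        rw [cliqueL_eq] at h'
        exact h'
      · intro b hb'
        have h0 := cliqueL_bdryL (yadj_iff_fy St w) c b
        rw [hc3] at h0
        rw [cliqueL_eq] at h0
        exact h0
  exact ⟨h12, h12.trans h23, h12.trans h23'⟩

end QuadrantWalk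
end
end

section
/- A 0-chain of the orbit cancels decoupled fractions if and only if it can be written as a ℂ-linear combination of 0-chains induced by bicolored loops; moreover, if the 0-chain has integer coefficients, the combination can be chosen with integer coefficients. -/
open IntermediateField
open scoped BigOperators Classical

set_option synthInstance.maxHeartbeats 1000000
set_option maxHeartbeats 1600000

noncomputable section

namespace QuadrantWalk

set_option linter.dupNamespace false
set_option linter.unusedSectionVars false
variable {K : Type} [Field K] [Algebra ℂ K]

/-! ### Generic helpers -/

lemma my_aeval_congr {s : Set (Fin 3)} {P : MvPolynomial (Fin 3) ℂ}
    (hP : P ∈ MvPolynomial.supported ℂ s) (v w' : Fin 3 → K)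
    (h : ∀ i ∈ s, v i = w' i) :
    MvPolynomial.aeval v P = MvPolynomial.aeval w' P := by
  rw [MvPolynomial.supported_eq_adjoin_X] at hP
  induction hP using Algebra.adjoin_induction with
  | mem z hz => obtain ⟨i, his, rfl⟩ := hz; simp [h i his]
  | algebraMap r => simp
  | add a b _ _ ha hb => simp [ha, hb]
  | mul a b _ _ ha hb => simp [ha, hb]

lemma my_sum_range_two_mul {M : Type*} [AddCommMonoid M] (n : ℕ) (h : ℕ → M) :
    ∑ j ∈ Finset.range (2 * n), h j = ∑ i ∈ Finset.range n, (h (2 * i) + h (2 * i + 1)) := by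
  induction n with
  | zero => simp
  | succ n ih =>
      have h2 : 2 * (n + 1) = (2 * n + 1) + 1 := by ring
      rw [h2, Finset.sum_range_succ, Finset.sum_range_succ, Finset.sum_range_succ, ih,
        add_assoc]

lemma my_neg_one_pow_odd (i : ℕ) : ((-1 : ℂ)) ^ (2 * i + 1) = -1 := by
  rw [pow_succ, pow_mul]; norm_num

lemma my_neg_one_pow_even (i : ℕ) : ((-1 : ℂ)) ^ (2 * i) = 1 := by
  rw [pow_mul]; norm_num

/-- Telescoping along a bicolored loop, for any decoupled function. -/
lemma my_pairing {M : Type*} [AddCommGroup M] [Module ℂ M] (f g : K → M)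
    (n : ℕ) (b : ℕ → K × K) (hclose : b (2 * n) = b 0)
    (hx : ∀ i < n, (b (2 * i)).1 = (b (2 * i + 1)).1)
    (hy : ∀ i < n, (b (2 * i + 1)).2 = (b (2 * i + 2)).2) :
    ∑ j ∈ Finset.range (2 * n), ((-1 : ℂ) ^ (j + 1)) • (f (b j).1 + g (b j).2) = 0 := by
  have hsplit : ∀ j, ((-1 : ℂ) ^ (j + 1)) • (f (b j).1 + g (b j).2)
      = ((-1 : ℂ) ^ (j + 1)) • f (b j).1 + ((-1 : ℂ) ^ (j + 1)) • g (b j).2 :=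
    fun j => smul_add _ _ _
  simp only [hsplit]
  rw [Finset.sum_add_distrib]
  have hf : ∑ j ∈ Finset.range (2 * n), ((-1 : ℂ) ^ (j + 1)) • f (b j).1 = 0 := by
    rw [my_sum_range_two_mul]
    apply Finset.sum_eq_zero
    intro i hi
    rw [Finset.mem_range] at hi
    have e1 : ((-1 : ℂ)) ^ (2 * i + 1) = -1 := my_neg_one_pow_odd i
    have e2 : ((-1 : ℂ)) ^ (2 * i + 1 + 1) = 1 := by
      rw [pow_succ, e1]; norm_num
    rw [e1, e2, hx i hi, one_smul, neg_smul, one_smul, neg_add_cancel]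
  have hg : ∑ j ∈ Finset.range (2 * n), ((-1 : ℂ) ^ (j + 1)) • g (b j).2 = 0 := by
    set G : ℕ → M := fun j => ((-1 : ℂ) ^ (j + 1)) • g (b j).2 with hG
    have hshift : ∑ j ∈ Finset.range (2 * n), G j = ∑ j ∈ Finset.range (2 * n), G (j + 1) := by
      rcases Nat.eq_zero_or_pos n with rfl | hn
      · simp
      · have h2n : 2 * n = (2 * n - 1) + 1 := by omega
        have hG0 : G 0 = G (2 * n) := by
          simp only [hG]
          rw [hclose, zero_add, my_neg_one_pow_odd n]
          norm_num
        rw [h2n, Finset.sum_range_succ' (fun j => G j), Finset.sum_range_succ (fun j => G (j + 1)),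
          hG0, ← h2n]
    rw [hshift, my_sum_range_two_mul]
    apply Finset.sum_eq_zero
    intro i hi
    rw [Finset.mem_range] at hi
    simp only [hG]
    have e1 : ((-1 : ℂ)) ^ (2 * i + 1 + 1) = 1 := by
      rw [pow_succ, my_neg_one_pow_odd i]; norm_num
    have e2 : ((-1 : ℂ)) ^ (2 * i + 1 + 1 + 1) = -1 := by
      rw [pow_succ, e1]; norm_num
    rw [e1, e2, hy i hi, one_smul, neg_smul, one_smul, add_neg_cancel]
  rw [hf, hg, add_zero]
/-! ### Chains built from cycles -/

/-- Evaluation of a linear functional on a chain that is a combination of singles. -/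
lemma my_lc_sum_single {M : Type*} [AddCommGroup M] [Module ℂ M] (φ : K × K → M)
    (m : ℕ) (c : ℕ → ℂ) (b : ℕ → K × K) :
    Finsupp.linearCombination ℂ φ
        (∑ j ∈ Finset.range m, c j • Finsupp.single (b j) (1 : ℂ))
      = ∑ j ∈ Finset.range m, c j • φ (b j) := by
  rw [map_sum]
  refine Finset.sum_congr rfl fun j _ => ?_
  rw [map_smul, Finsupp.linearCombination_single, one_smul]

lemma my_chain_apply (m : ℕ) (c : ℕ → ℂ) (b : ℕ → K × K) (p : K × K) :
    (∑ j ∈ Finset.range m, c j • Finsupp.single (b j) (1 : ℂ)) p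
      = ∑ j ∈ Finset.range m, (if b j = p then c j else 0) := by
  rw [Finset.sum_apply']
  refine Finset.sum_congr rfl fun j _ => ?_
  rw [Finsupp.smul_apply, Finsupp.single_apply]
  split <;> simp

lemma my_chain_apply_of_inj (m : ℕ) (c : ℕ → ℂ) (b : ℕ → K × K)
    (hinj : ∀ j k, j < m → k < m → b j = b k → j = k) (j₀ : ℕ) (hj₀ : j₀ < m) :
    (∑ j ∈ Finset.range m, c j • Finsupp.single (b j) (1 : ℂ)) (b j₀) = c j₀ := by
  rw [my_chain_apply]
  rw [Finset.sum_eq_single j₀]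
  · simp
  · intro j hj hne
    rw [Finset.mem_range] at hj
    have : b j ≠ b j₀ := fun h => hne (hinj j j₀ hj hj₀ h)
    simp [this]
  · intro h; exact absurd (Finset.mem_range.mpr hj₀) h

lemma my_chain_apply_of_notmem (m : ℕ) (c : ℕ → ℂ) (b : ℕ → K × K) (p : K × K)
    (hp : ∀ j < m, b j ≠ p) :
    (∑ j ∈ Finset.range m, c j • Finsupp.single (b j) (1 : ℂ)) p = 0 := by
  rw [my_chain_apply]
  refine Finset.sum_eq_zero fun j hj => ?_
  rw [Finset.mem_range] at hj
  simp [hp j hj]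

/-! ### Orbit facts -/

lemma my_orbit_stepEval (St : Finset (ℤ × ℤ)) (w : ℤ × ℤ → ℂ) (x y : K) :
    ∀ a ∈ orbit St w x y, stepEval St w a.1 a.2 = stepEval St w x y := by
  intro a ha
  induction ha with
  | refl => rfl
  | tail _ h ih =>
      rcases h with h | h
      · exact h.2.symm.trans ih
      · exact h.2.symm.trans ih

lemma my_orbit_xadj (St : Finset (ℤ × ℤ)) (w : ℤ × ℤ → ℂ) (x y : K)
    {a b : K × K} (ha : a ∈ orbit St w x y) (hb : b ∈ orbit St w x y)
    (h : a.1 = b.1) : XAdj St w a b :=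
  ⟨h, (my_orbit_stepEval St w x y a ha).trans (my_orbit_stepEval St w x y b hb).symm⟩

lemma my_orbit_yadj (St : Finset (ℤ × ℤ)) (w : ℤ × ℤ → ℂ) (x y : K)
    {a b : K × K} (ha : a ∈ orbit St w x y) (hb : b ∈ orbit St w x y)
    (h : a.2 = b.2) : YAdj St w a b :=
  ⟨h, (my_orbit_stepEval St w x y a ha).trans (my_orbit_stepEval St w x y b hb).symm⟩

/-! ### Row and column sums -/

/-- The row-sum functional. -/
def rowSum (u : K) : ((K × K) →₀ ℂ) →ₗ[ℂ] ℂ :=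
  Finsupp.linearCombination ℂ (fun a => if a.1 = u then (1 : ℂ) else 0)

/-- The column-sum functional. -/
def colSum (v : K) : ((K × K) →₀ ℂ) →ₗ[ℂ] ℂ :=
  Finsupp.linearCombination ℂ (fun a => if a.2 = v then (1 : ℂ) else 0)

lemma rowSum_eq_filter (u : K) (α : (K × K) →₀ ℂ) :
    rowSum u α = ∑ a ∈ α.support.filter (fun a => a.1 = u), α a := by
  rw [rowSum, Finsupp.linearCombination_apply, Finsupp.sum, Finset.sum_filter]
  refine Finset.sum_congr rfl fun a _ => ?_
  split <;> simp

lemma colSum_eq_filter (v : K) (α : (K × K) →₀ ℂ) :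
    colSum v α = ∑ a ∈ α.support.filter (fun a => a.2 = v), α a := by
  rw [colSum, Finsupp.linearCombination_apply, Finsupp.sum, Finset.sum_filter]
  refine Finset.sum_congr rfl fun a _ => ?_
  split <;> simp

/-- A bicolored chain has vanishing row sums and column sums. -/
lemma my_bicolored_rowcol (St : Finset (ℤ × ℤ)) (w : ℤ × ℤ → ℂ) (x y : K)
    {κ : (K × K) →₀ ℂ} (hκ : IsBicoloredChain St w x y κ) :
    (∀ u, rowSum u κ = 0) ∧ ∀ v, colSum v κ = 0 := by
  obtain ⟨n, b, hn, hclose, horb, hadj, rfl⟩ := hκ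
  constructor
  · intro u
    rw [rowSum, my_lc_sum_single]
    refine Eq.trans ?_ (my_pairing (fun z => if z = u then (1 : ℂ) else 0) (fun _ => (0 : ℂ))
      n b hclose (fun i hi => (hadj i hi).1.1) (fun i hi => (hadj i hi).2.1))
    exact Finset.sum_congr rfl fun j _ => by rw [add_zero]
  · intro v
    rw [colSum, my_lc_sum_single]
    refine Eq.trans ?_ (my_pairing (fun _ => (0 : ℂ)) (fun z => if z = v then (1 : ℂ) else 0)
      n b hclose (fun i hi => (hadj i hi).1.1) (fun i hi => (hadj i hi).2.1))
    exact Finset.sum_congr rfl fun j _ => by rw [zero_add]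
/-! ### Decoupled fractions depend on a single coordinate -/

lemma my_fracEval_fst (St : Finset (ℤ × ℤ)) (w : ℤ × ℤ → ℂ) (x y : K)
    {A B : MvPolynomial (Fin 3) ℂ}
    (hA : A ∈ MvPolynomial.supported ℂ ({0, 2} : Set (Fin 3)))
    (hB : B ∈ MvPolynomial.supported ℂ ({0, 2} : Set (Fin 3))) (a : K × K) :
    fracEval St w x y A B a = fracEval St w x y A B (a.1, a.1) := by
  have hv : ∀ i ∈ ({0, 2} : Set (Fin 3)),
      (![a.1, a.2, (stepEval St w x y)⁻¹] : Fin 3 → K) i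
        = (![a.1, a.1, (stepEval St w x y)⁻¹] : Fin 3 → K) i := by
    rintro i hi
    rcases hi with rfl | hi
    · rfl
    · rcases hi with rfl; rfl
  unfold fracEval evalPt
  rw [my_aeval_congr hA _ _ hv, my_aeval_congr hB _ _ hv]

lemma my_fracEval_snd (St : Finset (ℤ × ℤ)) (w : ℤ × ℤ → ℂ) (x y : K)
    {A B : MvPolynomial (Fin 3) ℂ}
    (hA : A ∈ MvPolynomial.supported ℂ ({1, 2} : Set (Fin 3)))
    (hB : B ∈ MvPolynomial.supported ℂ ({1, 2} : Set (Fin 3))) (a : K × K) :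
    fracEval St w x y A B a = fracEval St w x y A B (a.2, a.2) := by
  have hv : ∀ i ∈ ({1, 2} : Set (Fin 3)),
      (![a.1, a.2, (stepEval St w x y)⁻¹] : Fin 3 → K) i
        = (![a.2, a.2, (stepEval St w x y)⁻¹] : Fin 3 → K) i := by
    rintro i hi
    rcases hi with rfl | hi
    · rfl
    · rcases hi with rfl; rfl
  unfold fracEval evalPt
  rw [my_aeval_congr hA _ _ hv, my_aeval_congr hB _ _ hv]

/-- The chain evaluation of `α` on a decoupled function, as a `linearCombination`. -/
lemma my_sum_eq_lc (α : (K × K) →₀ ℂ) (φ : K × K → K) :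
    (α.sum fun a c => algebraMap ℂ K c * φ a) = Finsupp.linearCombination ℂ φ α := by
  rw [Finsupp.linearCombination_apply]
  exact Finsupp.sum_congr fun a _ => (Algebra.smul_def _ _).symm

/-- A bicolored chain cancels every decoupled pair of fractions (no regularity needed). -/
lemma my_bicolored_cancels (St : Finset (ℤ × ℤ)) (w : ℤ × ℤ → ℂ) (x y : K)
    {κ : (K × K) →₀ ℂ} (hκ : IsBicoloredChain St w x y κ)
    (A₁ B₁ A₂ B₂ : MvPolynomial (Fin 3) ℂ)
    (hA₁ : A₁ ∈ MvPolynomial.supported ℂ ({0, 2} : Set (Fin 3)))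
    (hB₁ : B₁ ∈ MvPolynomial.supported ℂ ({0, 2} : Set (Fin 3)))
    (hA₂ : A₂ ∈ MvPolynomial.supported ℂ ({1, 2} : Set (Fin 3)))
    (hB₂ : B₂ ∈ MvPolynomial.supported ℂ ({1, 2} : Set (Fin 3))) :
    (κ.sum fun a c =>
      algebraMap ℂ K c * (fracEval St w x y A₁ B₁ a + fracEval St w x y A₂ B₂ a)) = 0 := by
  rw [my_sum_eq_lc]
  obtain ⟨n, b, hn, hclose, horb, hadj, rfl⟩ := hκ
  rw [my_lc_sum_single]
  set f : K → K := fun u => fracEval St w x y A₁ B₁ (u, u) with hf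
  set g : K → K := fun v => fracEval St w x y A₂ B₂ (v, v) with hg
  refine Eq.trans ?_ (my_pairing f g n b hclose
    (fun i hi => (hadj i hi).1.1) (fun i hi => (hadj i hi).2.1))
  refine Finset.sum_congr rfl fun j _ => ?_
  rw [my_fracEval_fst St w x y hA₁ hB₁ (b j), my_fracEval_snd St w x y hA₂ hB₂ (b j)]

/-- Every chain in the span of bicolored chains cancels decoupled fractions. -/
lemma my_span_cancels (St : Finset (ℤ × ℤ)) (w : ℤ × ℤ → ℂ) (mx my : ℕ) (x y : K)
    {α : (K × K) →₀ ℂ}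
    (hα : α ∈ Submodule.span ℂ {β : (K × K) →₀ ℂ | IsBicoloredChain St w x y β}) :
    CancelsDecoupled St w mx my x y α := by
  intro A₁ B₁ A₂ B₂ hA₁ hB₁ hA₂ hB₂ _ _
  rw [my_sum_eq_lc]
  set L := Finsupp.linearCombination ℂ
    (fun a => fracEval St w x y A₁ B₁ a + fracEval St w x y A₂ B₂ a) with hL
  have hgen : {β : (K × K) →₀ ℂ | IsBicoloredChain St w x y β} ⊆ ↑(LinearMap.ker L) := by
    intro κ hκ
    have := my_bicolored_cancels St w x y hκ A₁ B₁ A₂ B₂ hA₁ hB₁ hA₂ hB₂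
    rw [my_sum_eq_lc] at this
    exact this
  have := Submodule.span_le.mpr hgen hα
  exact this
/-! ### Nonvanishing facts from algebraic independence -/

lemma my_x_ne_zero {St : Finset (ℤ × ℤ)} {w : ℤ × ℤ → ℂ} {x y : K}
    (hset : Setting St w x y) : x ≠ 0 := by
  intro hx0
  have hinj : Function.Injective (MvPolynomial.aeval ![x, y] :
      MvPolynomial (Fin 2) ℂ →ₐ[ℂ] K) := hset.indep
  have : (MvPolynomial.X 0 : MvPolynomial (Fin 2) ℂ) = 0 := by
    apply hinj
    simp [hx0]
  exact MvPolynomial.X_ne_zero 0 this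

lemma my_y_ne_zero {St : Finset (ℤ × ℤ)} {w : ℤ × ℤ → ℂ} {x y : K}
    (hset : Setting St w x y) : y ≠ 0 := by
  intro hy0
  have hinj : Function.Injective (MvPolynomial.aeval ![x, y] :
      MvPolynomial (Fin 2) ℂ →ₐ[ℂ] K) := hset.indep
  have : (MvPolynomial.X 1 : MvPolynomial (Fin 2) ℂ) = 0 := by
    apply hinj
    simp [hy0]
  exact MvPolynomial.X_ne_zero 1 this

lemma my_zpow_toNat {u : K} (hu : u ≠ 0) (n : ℤ) (m : ℕ) (h : -(m : ℤ) ≤ n) :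
    u ^ ((n + (m : ℤ)).toNat) = u ^ m * u ^ n := by
  have h0 : (0 : ℤ) ≤ n + m := by omega
  have : ((n + (m : ℤ)).toNat : ℤ) = n + m := Int.toNat_of_nonneg h0
  calc u ^ ((n + (m : ℤ)).toNat) = u ^ (((n + (m : ℤ)).toNat : ℤ)) := (zpow_natCast u _).symm
    _ = u ^ (n + (m : ℤ)) := by rw [this]
    _ = u ^ n * u ^ (m : ℤ) := zpow_add₀ hu n m
    _ = u ^ m * u ^ n := by rw [mul_comm, zpow_natCast]

lemma my_S_ne_zero {St : Finset (ℤ × ℤ)} {w : ℤ × ℤ → ℂ} {x y : K} {mx my : ℕ}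
    (hset : Setting St w x y) (hb : ExponentBounds St mx my) :
    stepEval St w x y ≠ 0 := by
  have hx0 := my_x_ne_zero hset
  have hy0 := my_y_ne_zero hset
  set P : MvPolynomial (Fin 2) ℂ :=
    ∑ p ∈ St, MvPolynomial.C (w p) * MvPolynomial.X 0 ^ (p.1 + (mx : ℤ)).toNat *
      MvPolynomial.X 1 ^ (p.2 + (my : ℤ)).toNat with hP
  have heval : MvPolynomial.aeval ![x, y] P = x ^ mx * y ^ my * stepEval St w x y := by
    rw [hP, map_sum, stepEval, Finset.mul_sum]
    refine Finset.sum_congr rfl fun p hp => ?_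
    rw [map_mul, map_mul, map_pow, map_pow, MvPolynomial.aeval_C, MvPolynomial.aeval_X,
      MvPolynomial.aeval_X]
    simp only [Matrix.cons_val_zero, Matrix.cons_val_one, Matrix.head_cons]
    rw [my_zpow_toNat hx0 p.1 mx (hb.lowerX p hp), my_zpow_toNat hy0 p.2 my (hb.lowerY p hp)]
    ring
  intro hS0
  obtain ⟨⟨p₀, hp₀, -⟩, -⟩ := hset.notUniv
  have hPz : P = 0 := by
    have hinj : Function.Injective (MvPolynomial.aeval ![x, y] :
        MvPolynomial (Fin 2) ℂ →ₐ[ℂ] K) := hset.indep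
    apply hinj
    rw [heval, hS0, mul_zero, map_zero]
  -- compute the coefficient of the monomial of `p₀`
  have hcoeff : MvPolynomial.coeff
      (Finsupp.single 0 ((p₀.1 + (mx : ℤ)).toNat) + Finsupp.single 1 ((p₀.2 + (my : ℤ)).toNat)) P
      = w p₀ := by
    rw [hP, MvPolynomial.coeff_sum]
    have hterm : ∀ p : ℤ × ℤ,
        MvPolynomial.C (w p) * MvPolynomial.X 0 ^ (p.1 + (mx : ℤ)).toNat *
          (MvPolynomial.X 1 : MvPolynomial (Fin 2) ℂ) ^ (p.2 + (my : ℤ)).toNat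
        = MvPolynomial.monomial
            (Finsupp.single 0 ((p.1 + (mx : ℤ)).toNat) + Finsupp.single 1 ((p.2 + (my : ℤ)).toNat))
            (w p) := by
      intro p
      rw [MvPolynomial.X_pow_eq_monomial, MvPolynomial.X_pow_eq_monomial,
        MvPolynomial.C_mul_monomial, MvPolynomial.monomial_mul]
      simp
    rw [Finset.sum_eq_single p₀]
    · rw [hterm, MvPolynomial.coeff_monomial, if_pos rfl]
    · intro p hp hne
      rw [hterm, MvPolynomial.coeff_monomial, if_neg]
      intro heq
      have h0 := congrFun (congrArg (fun f : (Fin 2) →₀ ℕ => (f : Fin 2 → ℕ)) heq) 0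
      have h1 := congrFun (congrArg (fun f : (Fin 2) →₀ ℕ => (f : Fin 2 → ℕ)) heq) 1
      simp only [Finsupp.coe_add, Pi.add_apply, Finsupp.single_apply] at h0 h1
      norm_num at h0 h1
      have e0 : p.1 = p₀.1 := by
        have l1 := hb.lowerX p hp
        have l2 := hb.lowerX p₀ hp₀
        omega
      have e1 : p.2 = p₀.2 := by
        have l1 := hb.lowerY p hp
        have l2 := hb.lowerY p₀ hp₀
        omega
      exact hne (Prod.ext e0 e1)
    · intro h; exact absurd hp₀ h
  rw [hPz, MvPolynomial.coeff_zero] at hcoeff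
  exact hset.weight_ne p₀ hp₀ hcoeff.symm

/-- The kernel polynomial vanishes at `(x, y, 1/S(x,y))`. -/
lemma my_kernel_eval_zero {St : Finset (ℤ × ℤ)} {w : ℤ × ℤ → ℂ} {x y : K} {mx my : ℕ}
    (hset : Setting St w x y) (hb : ExponentBounds St mx my) :
    MvPolynomial.aeval ![x, y, (stepEval St w x y)⁻¹] (kernelPoly St w mx my) = 0 := by
  have hx0 := my_x_ne_zero hset
  have hy0 := my_y_ne_zero hset
  have hS0 := my_S_ne_zero hset hb
  rw [kernelPoly, map_sub, map_mul, map_mul, map_pow, map_pow, map_sum]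
  simp only [MvPolynomial.aeval_X, Matrix.cons_val_zero, Matrix.cons_val_one, Matrix.head_cons,
    Matrix.cons_val_two, Matrix.tail_cons]
  have hsum : (∑ p ∈ St, MvPolynomial.aeval ![x, y, (stepEval St w x y)⁻¹]
      (MvPolynomial.C (w p) * MvPolynomial.X 0 ^ (p.1 + (mx : ℤ)).toNat *
        MvPolynomial.X 1 ^ (p.2 + (my : ℤ)).toNat))
      = x ^ mx * y ^ my * stepEval St w x y := by
    rw [stepEval, Finset.mul_sum]
    refine Finset.sum_congr rfl fun p hp => ?_
    rw [map_mul, map_mul, map_pow, map_pow, MvPolynomial.aeval_C, MvPolynomial.aeval_X,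
      MvPolynomial.aeval_X]
    simp only [Matrix.cons_val_zero, Matrix.cons_val_one, Matrix.head_cons]
    rw [my_zpow_toNat hx0 p.1 mx (hb.lowerX p hp), my_zpow_toNat hy0 p.2 my (hb.lowerY p hp)]
    ring
  rw [hsum]
  field_simp
  ring

/-- The kernel polynomial does not divide `1`. -/
lemma my_kernel_not_dvd_one {St : Finset (ℤ × ℤ)} {w : ℤ × ℤ → ℂ} {x y : K} {mx my : ℕ}
    (hset : Setting St w x y) (hb : ExponentBounds St mx my) :
    ¬ kernelPoly St w mx my ∣ (1 : MvPolynomial (Fin 3) ℂ) := by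
  rintro ⟨c, hc⟩
  have := congrArg (MvPolynomial.aeval ![x, y, (stepEval St w x y)⁻¹] :
    MvPolynomial (Fin 3) ℂ →ₐ[ℂ] K) hc
  rw [map_one, map_mul, my_kernel_eval_zero hset hb, zero_mul] at this
  exact one_ne_zero this
/-! ### Vandermonde / Lagrange separation -/

lemma my_vandermonde (α : (K × K) →₀ ℂ) (π : K × K → K)
    (hk : ∀ k : ℕ, ∑ a ∈ α.support, algebraMap ℂ K (α a) * (π a) ^ k = 0) :
    ∀ u : K, ∑ a ∈ α.support.filter (fun a => π a = u), α a = 0 := by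
  intro u
  by_cases hu : u ∈ α.support.image π
  · set nodes := α.support.image π with hnodes
    have hQ : ∀ Q : Polynomial K,
        ∑ a ∈ α.support, algebraMap ℂ K (α a) * Q.eval (π a) = 0 := by
      intro Q
      have he : ∀ a : K × K, Q.eval (π a)
          = ∑ k ∈ Finset.range (Q.natDegree + 1), Q.coeff k * (π a) ^ k :=
        fun a => Polynomial.eval_eq_sum_range _
      simp_rw [he, Finset.mul_sum]
      rw [Finset.sum_comm]
      refine Finset.sum_eq_zero fun k _ => ?_
      have h1 : ∑ a ∈ α.support, algebraMap ℂ K (α a) * (Q.coeff k * (π a) ^ k)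
          = Q.coeff k * ∑ a ∈ α.support, algebraMap ℂ K (α a) * (π a) ^ k := by
        rw [Finset.mul_sum]
        exact Finset.sum_congr rfl fun a _ => by ring
      rw [h1, hk k, mul_zero]
    have h1 := hQ (Lagrange.basis nodes id u)
    have h2 : ∑ a ∈ α.support,
        (if π a = u then algebraMap ℂ K (α a) else 0) = 0 := by
      refine Eq.trans (Finset.sum_congr rfl fun a ha => ?_) h1
      by_cases hpa : π a = u
      · rw [if_pos hpa, ← hpa]
        rw [hpa]
        have : (Lagrange.basis nodes id u).eval (id u) = 1 :=
          Lagrange.eval_basis_self (Set.injOn_id _) hu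
        simp only [id_eq] at this
        rw [this, mul_one]
      · rw [if_neg hpa]
        have hmem : π a ∈ nodes := Finset.mem_image_of_mem π ha
        have : (Lagrange.basis nodes id u).eval (id (π a)) = 0 :=
          Lagrange.eval_basis_of_ne (fun h => hpa h.symm) hmem
        simp only [id_eq] at this
        rw [this, mul_zero]
    have h3 : algebraMap ℂ K (∑ a ∈ α.support.filter (fun a => π a = u), α a) = 0 := by
      rw [map_sum, ← h2, Finset.sum_filter]
    exact (algebraMap ℂ K).injective (h3.trans (map_zero _).symm)
  · have : α.support.filter (fun a => π a = u) = ∅ := by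
      refine Finset.filter_eq_empty_iff.mpr fun a ha h => ?_
      exact hu (h ▸ Finset.mem_image_of_mem π ha)
    rw [this, Finset.sum_empty]

/-- A chain cancelling decoupled fractions has vanishing row and column sums. -/
lemma my_cancels_rowcol {St : Finset (ℤ × ℤ)} {w : ℤ × ℤ → ℂ} {x y : K} {mx my : ℕ}
    (hset : Setting St w x y) (hb : ExponentBounds St mx my)
    (α : (K × K) →₀ ℂ) (hc : CancelsDecoupled St w mx my x y α) :
    (∀ u, rowSum u α = 0) ∧ ∀ v, colSum v α = 0 := by
  have hnd := my_kernel_not_dvd_one (mx := mx) (my := my) hset hb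
  have h02 : (MvPolynomial.X 0 : MvPolynomial (Fin 3) ℂ)
      ∈ MvPolynomial.supported ℂ ({0, 2} : Set (Fin 3)) :=
    (MvPolynomial.X_mem_supported).mpr (Set.mem_insert _ _)
  have h12 : (MvPolynomial.X 1 : MvPolynomial (Fin 3) ℂ)
      ∈ MvPolynomial.supported ℂ ({1, 2} : Set (Fin 3)) :=
    (MvPolynomial.X_mem_supported).mpr (Set.mem_insert _ _)
  constructor
  · intro u
    rw [rowSum_eq_filter]
    refine my_vandermonde α Prod.fst ?_ u
    intro k
    have := hc (MvPolynomial.X 0 ^ k) 1 0 1 (pow_mem h02 k) (one_mem _) (zero_mem _)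
      (one_mem _) hnd hnd
    rw [Finsupp.sum] at this
    rw [← this]
    refine Finset.sum_congr rfl fun a _ => ?_
    congr 1
    unfold fracEval evalPt
    rw [map_pow, map_one, map_zero, MvPolynomial.aeval_X]
    simp
  · intro v
    rw [colSum_eq_filter]
    refine my_vandermonde α Prod.snd ?_ v
    intro k
    have := hc 0 1 (MvPolynomial.X 1 ^ k) 1 (zero_mem _) (one_mem _) (pow_mem h12 k)
      (one_mem _) hnd hnd
    rw [Finsupp.sum] at this
    rw [← this]
    refine Finset.sum_congr rfl fun a _ => ?_
    congr 1
    unfold fracEval evalPt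
    rw [map_pow, map_one, map_zero, MvPolynomial.aeval_X]
    simp
/-! ### From a simple alternating cycle to a bicolored chain -/

lemma my_extract (St : Finset (ℤ × ℤ)) (w : ℤ × ℤ → ℂ) (x y : K)
    (α : (K × K) →₀ ℂ) (hsupp : ↑α.support ⊆ orbit St w x y)
    (n : ℕ) (hn : 0 < n) (q : ℕ → K × K)
    (hclose : q (2 * n) = q 0)
    (hmem : ∀ j < 2 * n, q j ∈ α.support)
    (hx : ∀ i < n, (q (2 * i)).1 = (q (2 * i + 1)).1)
    (hy : ∀ i < n, (q (2 * i + 1)).2 = (q (2 * i + 2)).2)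
    (hinj : ∀ j k, j < 2 * n → k < 2 * n → q j = q k → j = k) :
    ∃ κ : (K × K) →₀ ℂ, IsBicoloredChain St w x y κ ∧
      κ (q 1) = 1 ∧ q 1 ∈ α.support ∧ (∀ p, p ∉ α.support → κ p = 0) ∧
      (∀ p, κ p = 0 ∨ κ p = 1 ∨ κ p = -1) := by
  have horb : ∀ j ≤ 2 * n, q j ∈ orbit St w x y := by
    intro j hj
    rcases eq_or_lt_of_le hj with rfl | hj
    · rw [hclose]; exact hsupp (hmem 0 (by omega))
    · exact hsupp (hmem j hj)
  refine ⟨∑ j ∈ Finset.range (2 * n), ((-1 : ℂ) ^ (j + 1)) • Finsupp.single (q j) (1 : ℂ),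
    ⟨n, q, hn, hclose, fun j hj => horb j (le_of_lt hj), fun i hi => ?_, rfl⟩, ?_, ?_, ?_, ?_⟩
  · constructor
    · exact my_orbit_xadj St w x y (horb _ (by omega)) (horb _ (by omega)) (hx i hi)
    · exact my_orbit_yadj St w x y (horb _ (by omega)) (horb _ (by omega)) (hy i hi)
  · rw [my_chain_apply_of_inj (2 * n) _ q hinj 1 (by omega)]
    norm_num
  · exact hmem 1 (by omega)
  · intro p hp
    refine my_chain_apply_of_notmem _ _ _ _ fun j hj hqj => hp (hqj ▸ hmem j hj)
  · intro p
    by_cases hp : ∃ j, j < 2 * n ∧ q j = p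
    · obtain ⟨j, hj, rfl⟩ := hp
      rw [my_chain_apply_of_inj (2 * n) _ q hinj j hj]
      rcases Nat.even_or_odd (j + 1) with he | ho
      · right; left; exact he.neg_one_pow
      · right; right; exact ho.neg_one_pow
    · push_neg at hp
      left
      exact my_chain_apply_of_notmem _ _ _ _ hp
/-! ### Core combinatorial decomposition -/

lemma my_core (St : Finset (ℤ × ℤ)) (w : ℤ × ℤ → ℂ) (x y : K) :
    ∀ N : ℕ, ∀ α : (K × K) →₀ ℂ, α.support.card ≤ N →
    ↑α.support ⊆ orbit St w x y →
    (∀ u, rowSum u α = 0) → (∀ v, colSum v α = 0) →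
    α ∈ Submodule.span ℂ {β : (K × K) →₀ ℂ | IsBicoloredChain St w x y β} ∧
    ((∀ p, ∃ m : ℤ, α p = (m : ℂ)) →
      α ∈ AddSubgroup.closure {β : (K × K) →₀ ℂ | IsBicoloredChain St w x y β}) := by
  intro N
  induction N with
  | zero =>
      intro α hcard _ _ _
      have : α = 0 := by
        have : α.support = ∅ := Finset.card_eq_zero.mp (Nat.le_zero.mp hcard)
        exact Finsupp.support_eq_empty.mp this
      subst this
      exact ⟨Submodule.zero_mem _, fun _ => AddSubgroup.zero_mem _⟩
  | succ N ih =>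
      intro α hcard hsupp hrow hcol
      by_cases h0 : α = 0
      · subst h0
        exact ⟨Submodule.zero_mem _, fun _ => AddSubgroup.zero_mem _⟩
      -- a starting point
      obtain ⟨a₀, ha₀⟩ := Finsupp.support_nonempty_iff.mpr h0
      -- every support point has a row partner and a column partner
      have hrowp : ∀ a ∈ α.support, ∃ b, b ∈ α.support ∧ b ≠ a ∧ b.1 = a.1 := by
        intro a ha
        by_contra hcon
        push_neg at hcon
        have hfil : α.support.filter (fun b => b.1 = a.1) = {a} := by
          apply Finset.eq_singleton_iff_unique_mem.mpr
          refine ⟨Finset.mem_filter.mpr ⟨ha, rfl⟩, fun b hb => ?_⟩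
          rcases Finset.mem_filter.mp hb with ⟨hb1, hb2⟩
          by_contra hne
          exact (hcon b hb1 hne) hb2
        have := hrow a.1
        rw [rowSum_eq_filter, hfil, Finset.sum_singleton] at this
        exact (Finsupp.mem_support_iff.mp ha) this
      have hcolp : ∀ a ∈ α.support, ∃ b, b ∈ α.support ∧ b ≠ a ∧ b.2 = a.2 := by
        intro a ha
        by_contra hcon
        push_neg at hcon
        have hfil : α.support.filter (fun b => b.2 = a.2) = {a} := by
          apply Finset.eq_singleton_iff_unique_mem.mpr
          refine ⟨Finset.mem_filter.mpr ⟨ha, rfl⟩, fun b hb => ?_⟩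
          rcases Finset.mem_filter.mp hb with ⟨hb1, hb2⟩
          by_contra hne
          exact (hcon b hb1 hne) hb2
        have := hcol a.2
        rw [colSum_eq_filter, hfil, Finset.sum_singleton] at this
        exact (Finsupp.mem_support_iff.mp ha) this
      -- partner functions
      set pr : K × K → K × K := fun a =>
        if h : ∃ b, b ∈ α.support ∧ b ≠ a ∧ b.1 = a.1 then h.choose else a with hprdef
      set pc : K × K → K × K := fun a =>
        if h : ∃ b, b ∈ α.support ∧ b ≠ a ∧ b.2 = a.2 then h.choose else a with hpcdef
      have hpr : ∀ a ∈ α.support, pr a ∈ α.support ∧ pr a ≠ a ∧ (pr a).1 = a.1 := by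
        intro a ha
        have h := hrowp a ha
        simp only [hprdef, dif_pos h]
        exact h.choose_spec
      have hpc : ∀ a ∈ α.support, pc a ∈ α.support ∧ pc a ≠ a ∧ (pc a).2 = a.2 := by
        intro a ha
        have h := hcolp a ha
        simp only [hpcdef, dif_pos h]
        exact h.choose_spec
      -- the walk
      set p : ℕ → K × K := fun n => Nat.rec a₀ (fun m ihm => if m % 2 = 0 then pr ihm else pc ihm) n
        with hpdef
      have hp0 : p 0 = a₀ := rfl
      have hpsucc : ∀ m, p (m + 1) = if m % 2 = 0 then pr (p m) else pc (p m) := fun m => rfl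
      have hpmem : ∀ m, p m ∈ α.support := by
        intro m
        induction m with
        | zero => exact ha₀
        | succ m ihm =>
            rw [hpsucc m]
            by_cases hm : m % 2 = 0
            · rw [if_pos hm]; exact (hpr (p m) ihm).1
            · rw [if_neg hm]; exact (hpc (p m) ihm).1
      have hne : ∀ m, p (m + 1) ≠ p m := by
        intro m
        rw [hpsucc m]
        by_cases hm : m % 2 = 0
        · rw [if_pos hm]; exact (hpr (p m) (hpmem m)).2.1
        · rw [if_neg hm]; exact (hpc (p m) (hpmem m)).2.1
      have hxeq : ∀ m, m % 2 = 0 → (p (m + 1)).1 = (p m).1 := by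
        intro m hm
        rw [hpsucc m, if_pos hm]
        exact (hpr (p m) (hpmem m)).2.2
      have hyeq : ∀ m, m % 2 = 1 → (p (m + 1)).2 = (p m).2 := by
        intro m hm
        rw [hpsucc m, if_neg (by omega)]
        exact (hpc (p m) (hpmem m)).2.2
      -- pigeonhole: a first repetition
      have hex : ∃ t : ℕ, ∃ s, s < t ∧ p s = p t := by
        obtain ⟨i, hi, j, hj, hij, hpij⟩ :=
          Finset.exists_ne_map_eq_of_card_lt_of_maps_to
            (s := Finset.range (α.support.card + 1)) (t := α.support)
            (by rw [Finset.card_range]; omega) (fun i _ => hpmem i)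
        rcases Nat.lt_or_ge i j with h | h
        · exact ⟨j, i, h, hpij⟩
        · exact ⟨i, j, by omega, hpij.symm⟩
      set T := Nat.find hex with hTdef
      obtain ⟨s, hsT, hpsT⟩ := Nat.find_spec hex
      have hinjT : ∀ j k, j < T → k < T → p j = p k → j = k := by
        intro j k hj hk hjk
        by_contra hnejk
        rcases Nat.lt_or_ge j k with h | h
        · exact Nat.find_min hex hk ⟨j, h, hjk⟩
        · exact Nat.find_min hex hj ⟨k, by omega, hjk.symm⟩
      have hd2 : s + 2 ≤ T := by
        by_contra hcon
        have hT1 : T = s + 1 := by omega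
        exact hne s (by rw [← hT1, ← hpsT])
      -- extraction of a simple alternating cycle, by parity of `s` and `T`
      have key : ∃ n : ℕ, 0 < n ∧ ∃ q : ℕ → K × K,
          q (2 * n) = q 0 ∧ (∀ j < 2 * n, q j ∈ α.support) ∧
          (∀ i < n, (q (2 * i)).1 = (q (2 * i + 1)).1) ∧
          (∀ i < n, (q (2 * i + 1)).2 = (q (2 * i + 2)).2) ∧
          (∀ j k, j < 2 * n → k < 2 * n → q j = q k → j = k) := by
        by_cases hs : s % 2 = 0 <;> by_cases hT : T % 2 = 0
        · -- s even, T even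
          refine ⟨(T - s) / 2, by omega, fun j => p (s + j), ?_, ?_, ?_, ?_, ?_⟩
          · beta_reduce
            rw [show s + 2 * ((T - s) / 2) = T from by omega, show s + 0 = s from rfl]
            exact hpsT.symm
          · intro j _
            beta_reduce
            exact hpmem (s + j)
          · intro i hi
            beta_reduce
            rw [show s + (2 * i + 1) = (s + 2 * i) + 1 from by omega]
            exact (hxeq (s + 2 * i) (by omega)).symm
          · intro i hi
            beta_reduce
            rw [show s + (2 * i + 2) = (s + (2 * i + 1)) + 1 from by omega]
            exact (hyeq (s + (2 * i + 1)) (by omega)).symm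
          · intro j k hj hk hjk
            beta_reduce at hjk
            have := hinjT (s + j) (s + k) (by omega) (by omega) hjk
            omega
        · -- s even, T odd
          refine ⟨(T - s - 1) / 2, by omega, fun j =>
            if j = 2 * ((T - s - 1) / 2) - 1 then p (s + 1)
            else if j = 2 * ((T - s - 1) / 2) then p (s + 2) else p (s + 2 + j), ?_, ?_, ?_, ?_, ?_⟩
          · beta_reduce
            rw [if_neg (by omega), if_pos rfl, if_neg (by omega), if_neg (by omega)]
          · intro j hj
            beta_reduce
            by_cases h1 : j = 2 * ((T - s - 1) / 2) - 1
            · rw [if_pos h1]; exact hpmem (s + 1)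
            · rw [if_neg h1, if_neg (by omega)]; exact hpmem (s + 2 + j)
          · intro i hi
            beta_reduce
            rw [if_neg (by omega), if_neg (by omega)]
            by_cases h1 : i + 1 = (T - s - 1) / 2
            · rw [if_pos (by omega)]
              rw [show s + 2 + 2 * i = T - 1 from by omega]
              have l1 : (p T).1 = (p (T - 1)).1 := by
                have h := hxeq (T - 1) (by omega)
                rw [show T - 1 + 1 = T from by omega] at h
                exact h
              have l2 : (p (s + 1)).1 = (p s).1 := hxeq s (by omega)
              rw [← hpsT] at l1
              rw [l2]
              exact l1.symm
            · rw [if_neg (by omega), if_neg (by omega)]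
              rw [show s + 2 + (2 * i + 1) = (s + 2 + 2 * i) + 1 from by omega]
              exact (hxeq (s + 2 + 2 * i) (by omega)).symm
          · intro i hi
            beta_reduce
            by_cases h1 : i + 1 = (T - s - 1) / 2
            · rw [if_pos (by omega), if_neg (by omega), if_pos (by omega)]
              exact (hyeq (s + 1) (by omega)).symm
            · rw [if_neg (by omega), if_neg (by omega), if_neg (by omega), if_neg (by omega)]
              rw [show s + 2 + (2 * i + 2) = (s + 2 + (2 * i + 1)) + 1 from by omega]
              exact (hyeq (s + 2 + (2 * i + 1)) (by omega)).symm
          · intro j k hj hk hjk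
            beta_reduce at hjk
            by_cases h1 : j = 2 * ((T - s - 1) / 2) - 1 <;>
              by_cases h2 : k = 2 * ((T - s - 1) / 2) - 1
            · omega
            · rw [if_pos h1, if_neg h2, if_neg (by omega)] at hjk
              have := hinjT (s + 1) (s + 2 + k) (by omega) (by omega) hjk
              omega
            · rw [if_neg h1, if_neg (by omega), if_pos h2] at hjk
              have := hinjT (s + 2 + j) (s + 1) (by omega) (by omega) hjk
              omega
            · rw [if_neg h1, if_neg (by omega), if_neg h2, if_neg (by omega)] at hjk
              have := hinjT (s + 2 + j) (s + 2 + k) (by omega) (by omega) hjk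
              omega
        · -- s odd, T even
          refine ⟨(T - s - 1) / 2, by omega, fun j =>
            if j = 2 * ((T - s - 1) / 2) then p (s + 1) else p (s + 1 + j), ?_, ?_, ?_, ?_, ?_⟩
          · beta_reduce
            rw [if_pos rfl, if_neg (by omega)]
          · intro j hj
            beta_reduce
            rw [if_neg (by omega)]; exact hpmem (s + 1 + j)
          · intro i hi
            beta_reduce
            rw [if_neg (by omega), if_neg (by omega)]
            rw [show s + 1 + (2 * i + 1) = (s + 1 + 2 * i) + 1 from by omega]
            exact (hxeq (s + 1 + 2 * i) (by omega)).symm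
          · intro i hi
            beta_reduce
            rw [if_neg (by omega)]
            by_cases h1 : i + 1 = (T - s - 1) / 2
            · rw [if_pos (by omega)]
              rw [show s + 1 + (2 * i + 1) = T - 1 from by omega]
              have l1 : (p T).2 = (p (T - 1)).2 := by
                have h := hyeq (T - 1) (by omega)
                rw [show T - 1 + 1 = T from by omega] at h
                exact h
              have l2 : (p (s + 1)).2 = (p s).2 := hyeq s (by omega)
              rw [← hpsT] at l1
              rw [l2]
              exact l1.symm
            · rw [if_neg (by omega)]
              rw [show s + 1 + (2 * i + 2) = (s + 1 + (2 * i + 1)) + 1 from by omega]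
              exact (hyeq (s + 1 + (2 * i + 1)) (by omega)).symm
          · intro j k hj hk hjk
            beta_reduce at hjk
            rw [if_neg (by omega), if_neg (by omega)] at hjk
            have := hinjT (s + 1 + j) (s + 1 + k) (by omega) (by omega) hjk
            omega
        · -- s odd, T odd
          refine ⟨(T - s) / 2, by omega, fun j =>
            if j = 2 * ((T - s) / 2) then p (s + 1) else p (s + 1 + j), ?_, ?_, ?_, ?_, ?_⟩
          · beta_reduce
            rw [if_pos rfl, if_neg (by omega)]
          · intro j hj
            beta_reduce
            rw [if_neg (by omega)]; exact hpmem (s + 1 + j)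
          · intro i hi
            beta_reduce
            rw [if_neg (by omega), if_neg (by omega)]
            rw [show s + 1 + (2 * i + 1) = (s + 1 + 2 * i) + 1 from by omega]
            exact (hxeq (s + 1 + 2 * i) (by omega)).symm
          · intro i hi
            beta_reduce
            rw [if_neg (by omega)]
            by_cases h1 : i + 1 = (T - s) / 2
            · rw [if_pos (by omega)]
              rw [show s + 1 + (2 * i + 1) = T from by omega, ← hpsT]
              exact (hyeq s (by omega)).symm
            · rw [if_neg (by omega)]
              rw [show s + 1 + (2 * i + 2) = (s + 1 + (2 * i + 1)) + 1 from by omega]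
              exact (hyeq (s + 1 + (2 * i + 1)) (by omega)).symm
          · intro j k hj hk hjk
            beta_reduce at hjk
            rw [if_neg (by omega), if_neg (by omega)] at hjk
            by_cases e1 : s + 1 + j = T <;> by_cases e2 : s + 1 + k = T
            · omega
            · rw [e1, ← hpsT] at hjk
              have := hinjT s (s + 1 + k) (by omega) (by omega) hjk
              omega
            · rw [e2, ← hpsT] at hjk
              have := hinjT (s + 1 + j) s (by omega) (by omega) hjk
              omega
            · have := hinjT (s + 1 + j) (s + 1 + k) (by omega) (by omega) hjk
              omega
      -- subtract a suitable multiple of the cycle chain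
      obtain ⟨n, hn0, q, hclose, hqmem, hqx, hqy, hqinj⟩ := key
      obtain ⟨κ, hbic, hκ1, hq1mem, hout, hpm⟩ :=
        my_extract St w x y α hsupp n hn0 q hclose hqmem hqx hqy hqinj
      set astar := q 1 with hastar
      set c := α astar with hc
      set α' := α - c • κ with hα'
      have happ : ∀ pt, α' pt = α pt - c * κ pt := by
        intro pt; rw [hα', Finsupp.sub_apply, Finsupp.smul_apply, smul_eq_mul]
      have hsub : α'.support ⊆ α.support.erase astar := by
        intro pt hpt
        rw [Finsupp.mem_support_iff] at hpt
        rw [Finset.mem_erase]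
        constructor
        · rintro rfl
          apply hpt
          rw [happ, hκ1, mul_one, hc, sub_self]
        · by_contra hpts
          apply hpt
          rw [happ, hout pt hpts, mul_zero, Finsupp.notMem_support_iff.mp hpts, sub_zero]
      have hcard' : α'.support.card ≤ N := by
        have h1 := Finset.card_le_card hsub
        have h2 : (α.support.erase astar).card = α.support.card - 1 :=
          Finset.card_erase_of_mem hq1mem
        have h3 : 0 < α.support.card := Finset.card_pos.mpr ⟨astar, hq1mem⟩
        omega
      have hsupp' : ↑α'.support ⊆ orbit St w x y := by
        intro pt hpt
        exact hsupp (Finset.erase_subset _ _ (hsub hpt))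
      have hrc := my_bicolored_rowcol St w x y hbic
      have hrow' : ∀ u, rowSum u α' = 0 := by
        intro u; rw [hα', map_sub, map_smul, hrow u, hrc.1 u, smul_zero, sub_zero]
      have hcol' : ∀ v, colSum v α' = 0 := by
        intro v; rw [hα', map_sub, map_smul, hcol v, hrc.2 v, smul_zero, sub_zero]
      obtain ⟨hspan', hint'⟩ := ih α' hcard' hsupp' hrow' hcol'
      have hrecon : α = α' + c • κ := by rw [hα']; abel
      constructor
      · rw [hrecon]
        exact Submodule.add_mem _ hspan' (Submodule.smul_mem _ c (Submodule.subset_span hbic))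
      · intro hint
        obtain ⟨m, hm⟩ := hint astar
        have hcm : c = (m : ℂ) := hc.trans hm
        have hint2 : ∀ pt, ∃ m' : ℤ, α' pt = ((m' : ℤ) : ℂ) := by
          intro pt
          obtain ⟨mp, hmp⟩ := hint pt
          rcases hpm pt with h | h | h
          · exact ⟨mp, by rw [happ, h, mul_zero, sub_zero, hmp]⟩
          · refine ⟨mp - m, ?_⟩
            rw [happ, h, mul_one, hmp, hcm]
            push_cast; ring
          · refine ⟨mp + m, ?_⟩
            rw [happ, h, hmp, hcm]
            push_cast; ring
        have hκmem : κ ∈ AddSubgroup.closure {β : (K × K) →₀ ℂ | IsBicoloredChain St w x y β} :=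
          AddSubgroup.subset_closure hbic
        rw [hrecon]
        refine AddSubgroup.add_mem _ (hint' hint2) ?_
        have hsmul : c • κ = m • κ := by rw [hcm, Int.cast_smul_eq_zsmul]
        rw [hsmul]
        exact AddSubgroup.zsmul_mem _ hκmem m

/-- a `0`-chain of the orbit cancels decoupled fractions iff it is a
`ℂ`-linear combination of `0`-chains induced by bicolored loops; if it has integer
coefficients, the combination can be taken with integer coefficients. -/
theorem stmt16 {K : Type} [Field K] [Algebra ℂ K]
    (St : Finset (ℤ × ℤ)) (w : ℤ × ℤ → ℂ) (x y : K) (mx my : ℕ)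
    (hset : Setting St w x y) (hb : ExponentBounds St mx my)
    (α : (K × K) →₀ ℂ) (hα : ↑α.support ⊆ orbit St w x y) :
    (CancelsDecoupled St w mx my x y α ↔
      α ∈ Submodule.span ℂ {β : (K × K) →₀ ℂ | IsBicoloredChain St w x y β}) ∧
    (CancelsDecoupled St w mx my x y α → (∀ p, ∃ m : ℤ, α p = (m : ℂ)) →
      α ∈ AddSubgroup.closure {β : (K × K) →₀ ℂ | IsBicoloredChain St w x y β}) := by
  have hforward : CancelsDecoupled St w mx my x y α →
      α ∈ Submodule.span ℂ {β : (K × K) →₀ ℂ | IsBicoloredChain St w x y β} ∧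
      ((∀ p, ∃ m : ℤ, α p = (m : ℂ)) →
        α ∈ AddSubgroup.closure {β : (K × K) →₀ ℂ | IsBicoloredChain St w x y β}) := by
    intro hc
    obtain ⟨hr, hcn⟩ := my_cancels_rowcol hset hb α hc
    exact my_core St w x y α.support.card α le_rfl hα hr hcn
  exact ⟨⟨fun hc => (hforward hc).1, fun hsp => my_span_cancels St w mx my x y hsp⟩,
    fun hc hint => (hforward hc).2 hint⟩

end QuadrantWalk
end
end
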